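/- arXiv:2412.19476 — 3 statements merged into one kernel-verified Lean document; each statement's English description precedes it below -/
import Mathlib

section
/- (Grönwall's lemma, integral form, general conclusion.) Let T ∈ (0, ∞]. Let α, ψ : [0, T) → ℝ be essentially bounded measurable functions and let λ : [0, T) → ℝ be integrable with λ(t) ≥ 0 for almost every t ∈ [0, T). Define γ(t) := ∫₀ᵗ λ(τ) dτ. If α(t) ≤ ψ(t) + ∫₀ᵗ λ(s) α(s) ds for almost every t ∈ [0, T), then for almost every t ∈ [0, T), α(t) ≤ ψ(t) + ∫₀ᵗ e^{γ(t) − γ(s)} λ(s) ψ(s) ds. -/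
open MeasureTheory Filter Set intervalIntegral Topology

lemma abs_intervalIntegral_le {f : ℝ → ℝ} (hf : Integrable f) (a b : ℝ) :
    |∫ x in a..b, f x| ≤ ∫ x, |f x| := by
  have h1 : |∫ x in a..b, f x| ≤ ∫ x in Set.uIoc a b, ‖f x‖ := by
    rw [← Real.norm_eq_abs]; exact norm_integral_le_integral_norm_uIoc
  refine h1.trans ?_
  have h2 : (∫ x in Set.uIoc a b, ‖f x‖) ≤ ∫ x, ‖f x‖ :=
    setIntegral_le_integral hf.norm (Eventually.of_forall fun x => norm_nonneg _)
  simpa [Real.norm_eq_abs] using h2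

lemma integrable_mul_bdd {l f : ℝ → ℝ} (hl0 : ∀ s, 0 ≤ l s) (hlint : Integrable l)
    (hf : AEStronglyMeasurable f volume) {D : ℝ} (hD : ∀ s, |f s| ≤ D) :
    Integrable (fun s => l s * f s) := by
  refine Integrable.mono' (hlint.const_mul D) (hlint.1.mul hf) ?_
  filter_upwards with s
  rw [Real.norm_eq_abs, abs_mul, abs_of_nonneg (hl0 s)]
  calc l s * |f s| ≤ l s * D := mul_le_mul_of_nonneg_left (hD s) (hl0 s)
    _ = D * l s := mul_comm _ _

lemma keyFTC (l : ℝ → ℝ) (hlint : Integrable l)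
    (g g' : ℝ → ℝ) (hg : ∀ x, HasDerivAt g (g' x) x) (hg'c : Continuous g')
    (r t : ℝ) (hrt : r ≤ t) :
    ∫ s in r..t, l s * g' (∫ τ in (0:ℝ)..s, l τ)
      = g (∫ τ in (0:ℝ)..t, l τ) - g (∫ τ in (0:ℝ)..r, l τ) := by
  set γ : ℝ → ℝ := fun s => ∫ τ in (0:ℝ)..s, l τ with hγdef
  have hγcont : Continuous γ := hlint.continuous_primitive 0
  have approx : ∀ n : ℕ, ∃ φ : ℝ → ℝ, Continuous φ ∧ Integrable φ ∧
      ∫ x, ‖l x - φ x‖ ≤ 1 / (n + 1) := by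
    intro n
    obtain ⟨ψ, _, hψ2, hψ3, hψ4⟩ := hlint.exists_hasCompactSupport_integral_sub_le
      (by positivity : (0:ℝ) < 1 / (n+1))
    exact ⟨ψ, hψ3, hψ4, hψ2⟩
  choose φ hφc hφi hφe using approx
  set γn : ℕ → ℝ → ℝ := fun n s => ∫ τ in (0:ℝ)..s, φ n τ with hγndef
  have hγncont : ∀ n, Continuous (γn n) := fun n => (hφi n).continuous_primitive 0
  have hinv : ∀ n : ℕ, (0:ℝ) < 1 / (n+1) := fun n => by positivity
  have hinv1 : ∀ n : ℕ, (1:ℝ) / (n+1) ≤ 1 := by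
    intro n
    rw [div_le_one (by positivity)]
    exact le_add_of_nonneg_left (Nat.cast_nonneg n)
  have hdiff : ∀ n s, |γn n s - γ s| ≤ 1 / (n+1) := by
    intro n s
    have heq : γn n s - γ s = ∫ τ in (0:ℝ)..s, (φ n τ - l τ) := by
      rw [intervalIntegral.integral_sub ((hφi n).intervalIntegrable) hlint.intervalIntegrable]
    rw [heq]
    refine (abs_intervalIntegral_le ((hφi n).sub hlint) 0 s).trans ?_
    calc (∫ τ, |φ n τ - l τ|) = ∫ τ, ‖l τ - φ n τ‖ := by
          congr 1; funext τ; rw [Real.norm_eq_abs, abs_sub_comm]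
      _ ≤ 1/(n+1) := hφe n
  set K : ℝ := ∫ x, |l x| with hKdef
  have hγbd : ∀ s, |γ s| ≤ K := fun s => abs_intervalIntegral_le hlint 0 s
  have hγnbd : ∀ n s, |γn n s| ≤ K + 1 := by
    intro n s
    calc |γn n s| ≤ |γ s| + |γn n s - γ s| := by
          have := abs_add_le (γ s) (γn n s - γ s); simpa using this
      _ ≤ K + 1 := add_le_add (hγbd s) ((hdiff n s).trans (hinv1 n))
  have hK0 : 0 ≤ K := integral_nonneg fun x => abs_nonneg _
  obtain ⟨Mg, hMg⟩ := IsCompact.exists_bound_of_continuousOn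
    (isCompact_Icc : IsCompact (Icc (-(K+1)) (K+1))) hg'c.continuousOn
  have hMg0 : 0 ≤ Mg := le_trans (norm_nonneg _) (hMg 0 (by constructor <;> nlinarith))
  have hmemγ : ∀ s, γ s ∈ Icc (-(K+1)) (K+1) := by
    intro s
    have := hγbd s
    rw [abs_le] at this
    constructor <;> nlinarith [this.1, this.2]
  have hmemγn : ∀ n s, γn n s ∈ Icc (-(K+1)) (K+1) := by
    intro n s
    have := hγnbd n s
    rw [abs_le] at this
    exact ⟨this.1, this.2⟩
  -- continuous-case identity
  have hFTCn : ∀ n, ∫ s in r..t, φ n s * g' (γn n s) = g (γn n t) - g (γn n r) := by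
    intro n
    have hγn_deriv : ∀ s, HasDerivAt (γn n) (φ n s) s := by
      intro s
      exact intervalIntegral.integral_hasDerivAt_right ((hφc n).intervalIntegrable _ _)
        ((hφc n).stronglyMeasurableAtFilter _ _) (hφc n).continuousAt
    have hcomp : ∀ s, HasDerivAt (fun x => g (γn n x)) (φ n s * g' (γn n s)) s := by
      intro s
      have := (hg (γn n s)).comp s (hγn_deriv s)
      rw [mul_comm] at this; exact this
    exact intervalIntegral.integral_eq_sub_of_hasDerivAt (fun x _ => hcomp x)
      (((hφc n).mul (hg'c.comp (hγncont n))).intervalIntegrable r t)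
  -- convergence of RHS
  have hgcont : Continuous g := by
    rw [continuous_iff_continuousAt]; exact fun x => (hg x).continuousAt
  have hγnlim : ∀ s, Tendsto (fun n => γn n s) atTop (𝓝 (γ s)) := by
    intro s
    rw [← tendsto_sub_nhds_zero_iff]
    refine squeeze_zero_norm (fun n => ?_) tendsto_one_div_add_atTop_nhds_zero_nat
    simpa [Real.norm_eq_abs] using hdiff n s
  have hRHSlim : Tendsto (fun n => g (γn n t) - g (γn n r)) atTop (𝓝 (g (γ t) - g (γ r))) :=
    Tendsto.sub ((hgcont.continuousAt.tendsto.comp (hγnlim t)))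
      ((hgcont.continuousAt.tendsto.comp (hγnlim r)))
  -- convergence of LHS
  have hint_main : Integrable (fun s => l s * g' (γ s)) := by
    refine Integrable.mono' (hlint.abs.const_mul Mg)
      (hlint.1.mul ((hg'c.comp hγcont).aestronglyMeasurable)) ?_
    filter_upwards with s
    rw [Real.norm_eq_abs, abs_mul]
    exact mul_le_mul_of_nonneg_left ((Real.norm_eq_abs _ ▸ hMg _ (hmemγ s))) (abs_nonneg _) |>.trans
      (by rw [mul_comm])
  have hgn'meas : ∀ n, Continuous fun s => g' (γn n s) := fun n => hg'c.comp (hγncont n)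
  have hI1int : ∀ n, Integrable (fun s => (φ n s - l s) * g' (γn n s)) := by
    intro n
    refine Integrable.mono' (((hφi n).sub hlint).abs.const_mul Mg)
      (((hφi n).sub hlint).1.mul (hgn'meas n).aestronglyMeasurable) ?_
    filter_upwards with s
    rw [Real.norm_eq_abs, abs_mul, mul_comm Mg]
    exact mul_le_mul_of_nonneg_left (Real.norm_eq_abs _ ▸ hMg _ (hmemγn n s)) (abs_nonneg _)
  have hI2int : ∀ n, Integrable (fun s => l s * (g' (γn n s) - g' (γ s))) := by
    intro n
    refine Integrable.mono' (hlint.abs.const_mul (2*Mg))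
      (hlint.1.mul ((hgn'meas n).sub (hg'c.comp hγcont)).aestronglyMeasurable) ?_
    filter_upwards with s
    rw [Real.norm_eq_abs, abs_mul, mul_comm (2*Mg)]
    refine mul_le_mul_of_nonneg_left ?_ (abs_nonneg _)
    calc |g' (γn n s) - g' (γ s)| ≤ |g' (γn n s)| + |g' (γ s)| := abs_sub _ _
      _ ≤ Mg + Mg := add_le_add (Real.norm_eq_abs _ ▸ hMg _ (hmemγn n s))
          (Real.norm_eq_abs _ ▸ hMg _ (hmemγ s))
      _ = 2 * Mg := by ring
  have hsplit : ∀ n, ∫ s in r..t, φ n s * g' (γn n s)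
      = (∫ s in r..t, l s * g' (γ s))
        + ((∫ s in r..t, (φ n s - l s) * g' (γn n s))
          + ∫ s in r..t, l s * (g' (γn n s) - g' (γ s))) := by
    intro n
    have hsum : Integrable (fun s => (φ n s - l s) * g' (γn n s)
        + l s * (g' (γn n s) - g' (γ s))) volume := (hI1int n).add (hI2int n)
    have e1 : ∫ s in r..t, φ n s * g' (γn n s)
        = ∫ s in r..t, (l s * g' (γ s)
          + ((φ n s - l s) * g' (γn n s) + l s * (g' (γn n s) - g' (γ s)))) := by
      apply intervalIntegral.integral_congr
      intro s _
      ring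
    rw [e1, intervalIntegral.integral_add hint_main.intervalIntegrable hsum.intervalIntegrable,
      intervalIntegral.integral_add ((hI1int n).intervalIntegrable) ((hI2int n).intervalIntegrable)]
  have hI1bd : ∀ n, |∫ s in r..t, (φ n s - l s) * g' (γn n s)| ≤ Mg * (1/(n+1)) := by
    intro n
    refine (abs_intervalIntegral_le (hI1int n) r t).trans ?_
    have h1 : (∫ x, |(φ n x - l x) * g' (γn n x)|) ≤ ∫ x, Mg * |φ n x - l x| := by
      refine integral_mono (hI1int n).abs (((hφi n).sub hlint).abs.const_mul Mg) fun x => ?_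
      rw [abs_mul, mul_comm Mg]
      exact mul_le_mul_of_nonneg_left (Real.norm_eq_abs _ ▸ hMg _ (hmemγn n x)) (abs_nonneg _)
    refine h1.trans ?_
    rw [MeasureTheory.integral_const_mul]
    refine mul_le_mul_of_nonneg_left ?_ hMg0
    calc (∫ x, |φ n x - l x|) = ∫ x, ‖l x - φ n x‖ := by
          congr 1; funext x; rw [Real.norm_eq_abs, abs_sub_comm]
      _ ≤ 1/(n+1) := hφe n
  have hI2lim : Tendsto (fun n => ∫ s in r..t, l s * (g' (γn n s) - g' (γ s))) atTop (𝓝 0) := by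
    simp only [intervalIntegral.integral_of_le hrt]
    have h0 : (0:ℝ) = ∫ s in Ioc r t, (0:ℝ) := by simp
    rw [h0]
    refine MeasureTheory.tendsto_integral_of_dominated_convergence
      (fun s => |l s| * (2*Mg)) (fun n => ?_) ?_ (fun n => ?_) ?_
    · exact (hlint.1.mul ((hgn'meas n).sub (hg'c.comp hγcont)).aestronglyMeasurable).restrict
    · exact (hlint.abs.mul_const (2*Mg)).restrict
    · filter_upwards with s
      rw [Real.norm_eq_abs, abs_mul]
      refine mul_le_mul_of_nonneg_left ?_ (abs_nonneg _)
      calc |g' (γn n s) - g' (γ s)| ≤ |g' (γn n s)| + |g' (γ s)| := abs_sub _ _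
        _ ≤ Mg + Mg := add_le_add (Real.norm_eq_abs _ ▸ hMg _ (hmemγn n s))
            (Real.norm_eq_abs _ ▸ hMg _ (hmemγ s))
        _ = 2 * Mg := by ring
    · filter_upwards with s
      have h1 : Tendsto (fun n => g' (γn n s)) atTop (𝓝 (g' (γ s))) :=
        hg'c.continuousAt.tendsto.comp (hγnlim s)
      have h2 : Tendsto (fun n => g' (γn n s) - g' (γ s)) atTop (𝓝 0) := by
        simpa using h1.sub_const (g' (γ s))
      simpa using h2.const_mul (l s)
  have hLHSlim : Tendsto (fun n => ∫ s in r..t, φ n s * g' (γn n s)) atTop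
      (𝓝 (∫ s in r..t, l s * g' (γ s))) := by
    rw [← tendsto_sub_nhds_zero_iff]
    have hbnd : Tendsto (fun n : ℕ => Mg * (1/(n+1))
        + |∫ s in r..t, l s * (g' (γn n s) - g' (γ s))|) atTop (𝓝 0) := by
      have ha : Tendsto (fun n : ℕ => Mg * (1/(n+1))) atTop (𝓝 0) := by
        simpa using tendsto_one_div_add_atTop_nhds_zero_nat.const_mul Mg
      have hb : Tendsto (fun n => |∫ s in r..t, l s * (g' (γn n s) - g' (γ s))|) atTop (𝓝 0) := by
        simpa using hI2lim.abs
      simpa using ha.add hb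
    refine squeeze_zero_norm (fun n => ?_) hbnd
    · rw [hsplit n]
      rw [Real.norm_eq_abs]
      have : (∫ s in r..t, l s * g' (γ s))
          + ((∫ s in r..t, (φ n s - l s) * g' (γn n s))
            + (∫ s in r..t, l s * (g' (γn n s) - g' (γ s))))
          - (∫ s in r..t, l s * g' (γ s))
          = (∫ s in r..t, (φ n s - l s) * g' (γn n s))
            + (∫ s in r..t, l s * (g' (γn n s) - g' (γ s))) := by ring
      rw [this]
      exact (abs_add_le _ _).trans (add_le_add (hI1bd n) le_rfl)
  have h2 : Tendsto (fun n => ∫ s in r..t, φ n s * g' (γn n s)) atTop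
      (𝓝 (g (γ t) - g (γ r))) := by
    simp only [hFTCn]
    exact hRHSlim
  exact tendsto_nhds_unique hLHSlim h2

lemma lemH (l w : ℝ → ℝ) (hl0 : ∀ s, 0 ≤ l s) (hlint : Integrable l)
    (t₀ : ℝ) (ht₀ : 0 ≤ t₀) (hwc : Continuous w) {D : ℝ} (hwb : ∀ s, |w s| ≤ D)
    (hw : ∀ t ∈ Icc (0:ℝ) t₀, w t ≤ ∫ r in (0:ℝ)..t, l r * w r) :
    w t₀ ≤ 0 := by
  set γ : ℝ → ℝ := fun s => ∫ τ in (0:ℝ)..s, l τ with hγdef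
  have hγ0 : γ 0 = 0 := intervalIntegral.integral_same
  set K : ℝ := ∫ x, |l x| with hK
  have hγbd : ∀ s, |γ s| ≤ K := fun s => abs_intervalIntegral_le hlint 0 s
  set M : ℝ := max D 0 with hM
  have hM0 : 0 ≤ M := le_max_right _ _
  have hwM : ∀ s, w s ≤ M := fun s => le_trans (le_trans (le_abs_self _) (hwb s)) (le_max_left _ _)
  have hγcont : Continuous γ := hlint.continuous_primitive 0
  have hmono : ∀ (n : ℕ) (t : ℝ), 0 ≤ t →
      ∫ s in (0:ℝ)..t, l s * (γ s)^n = (γ t)^(n+1) / ((n:ℝ)+1) := by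
    intro n t ht
    have hg : ∀ x : ℝ, HasDerivAt (fun x : ℝ => x^(n+1) / ((n:ℝ)+1)) (x^n) x := by
      intro x
      have h1 := (hasDerivAt_pow (n+1) x).div_const ((n:ℝ)+1)
      have h2 : (↑(n + 1) * x ^ (n + 1 - 1)) / ((n:ℝ)+1) = x ^ n := by
        push_cast
        field_simp
      rwa [h2] at h1
    have := keyFTC l hlint (fun x : ℝ => x^(n+1) / ((n:ℝ)+1)) (fun x => x^n) hg
      (continuous_pow n) 0 t ht
    rw [this]
    simp [hγ0]
    rfl
  have claim : ∀ n : ℕ, ∀ t ∈ Icc (0:ℝ) t₀, w t ≤ M * (γ t)^n / n.factorial := by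
    intro n
    induction n with
    | zero => intro t _; simpa using hwM t
    | succ n ih =>
      intro t ht
      refine (hw t ht).trans ?_
      have hγnmeas : AEStronglyMeasurable (fun s => M * (γ s)^n / (n.factorial:ℝ)) volume :=
        ((continuous_const.mul (hγcont.pow n)).div_const _).aestronglyMeasurable
      have hγnbd : ∀ s, |M * (γ s)^n / (n.factorial:ℝ)| ≤ M * K^n / n.factorial := by
        intro s
        have he : |M * (γ s)^n / (n.factorial:ℝ)| = M * |γ s|^n / n.factorial := by
          rw [abs_div, abs_mul, abs_pow, abs_of_nonneg hM0, Nat.abs_cast]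
        rw [he]
        have hpow : |γ s| ^ n ≤ K ^ n := pow_le_pow_left₀ (abs_nonneg _) (hγbd s) n
        have h3 : M * |γ s| ^ n ≤ M * K ^ n := mul_le_mul_of_nonneg_left hpow hM0
        exact (div_le_div_iff_of_pos_right (Nat.cast_pos.mpr n.factorial_pos)).2 h3
      have hstep : ∫ r in (0:ℝ)..t, l r * w r
          ≤ ∫ r in (0:ℝ)..t, l r * (M * (γ r)^n / n.factorial) := by
        refine intervalIntegral.integral_mono_on ht.1 ?_ ?_ ?_
        · exact (integrable_mul_bdd hl0 hlint hwc.aestronglyMeasurable hwb).intervalIntegrable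
        · exact (integrable_mul_bdd hl0 hlint hγnmeas hγnbd).intervalIntegrable
        · intro x hx
          exact mul_le_mul_of_nonneg_left (ih x ⟨hx.1, hx.2.trans ht.2⟩) (hl0 x)
      refine hstep.trans ?_
      have e : ∫ r in (0:ℝ)..t, l r * (M * (γ r)^n / n.factorial)
          = (M / n.factorial) * ∫ r in (0:ℝ)..t, l r * (γ r)^n := by
        rw [← intervalIntegral.integral_const_mul]
        apply intervalIntegral.integral_congr
        intro s _
        ring
      rw [e, hmono n t ht.1]
      have harith : (M / n.factorial) * ((γ t)^(n+1) / ((n:ℝ)+1))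
          = M * (γ t)^(n+1) / (n+1).factorial := by
        rw [Nat.factorial_succ]
        push_cast
        rw [div_mul_div_comm]
        ring
      rw [harith]
  have hlim : Tendsto (fun n : ℕ => M * (γ t₀)^n / n.factorial) atTop (𝓝 0) := by
    have h1 := FloorSemiring.tendsto_pow_div_factorial_atTop (γ t₀)
    have := h1.const_mul M
    simpa [mul_div_assoc] using this
  exact ge_of_tendsto' hlim (fun n => claim n t₀ ⟨ht₀, le_rfl⟩)

lemma gronwall_main (l a p : ℝ → ℝ) (hl : Measurable l) (hl0 : ∀ s, 0 ≤ l s)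
    (hlint : Integrable l) (ham : Measurable a) (hpm : Measurable p)
    (C : ℝ) (haC : ∀ s, |a s| ≤ C) (hpC : ∀ s, |p s| ≤ C)
    (t₀ : ℝ) (ht₀ : 0 ≤ t₀)
    (hyp : ∀ᵐ s ∂(volume.restrict (Icc (0:ℝ) t₀)),
      a s ≤ p s + ∫ r in (0:ℝ)..s, l r * a r) :
    (∫ r in (0:ℝ)..t₀, l r * a r)
      ≤ ∫ r in (0:ℝ)..t₀,
          Real.exp ((∫ τ in (0:ℝ)..t₀, l τ) - (∫ τ in (0:ℝ)..r, l τ)) * (l r * p r) := by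
  set γ : ℝ → ℝ := fun s => ∫ τ in (0:ℝ)..s, l τ with hγdef
  have hγcont : Continuous γ := hlint.continuous_primitive 0
  set K : ℝ := ∫ x, |l x| with hK
  have hγbd : ∀ s, |γ s| ≤ K := fun s => abs_intervalIntegral_le hlint 0 s
  have hexpγ : ∀ s, Real.exp (γ s) ≤ Real.exp K :=
    fun s => Real.exp_le_exp.2 ((le_abs_self _).trans (hγbd s))
  have hexpγ' : ∀ s, Real.exp (-γ s) ≤ Real.exp K :=
    fun s => Real.exp_le_exp.2 ((neg_le_abs _).trans (hγbd s))
  have expFTC : ∀ r t : ℝ, r ≤ t →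
      ∫ s in r..t, l s * Real.exp (γ s) = Real.exp (γ t) - Real.exp (γ r) :=
    fun r t hrt => keyFTC l hlint Real.exp Real.exp (fun x => Real.hasDerivAt_exp x)
      Real.continuous_exp r t hrt
  -- u
  have hla_int : Integrable (fun r => l r * a r) :=
    integrable_mul_bdd hl0 hlint ham.aestronglyMeasurable haC
  set u : ℝ → ℝ := fun s => ∫ r in (0:ℝ)..s, l r * a r with hudef
  have hu_cont : Continuous u := hla_int.continuous_primitive 0
  set Cu : ℝ := ∫ x, |l x * a x| with hCu
  have hu_bd : ∀ s, |u s| ≤ Cu := fun s => abs_intervalIntegral_le hla_int 0 s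
  -- q and P
  set q : ℝ → ℝ := fun r => Real.exp (-γ r) * (l r * p r) with hqdef
  have hq_meas : Measurable q :=
    ((Real.continuous_exp.comp hγcont.neg).measurable).mul (hl.mul hpm)
  have hq_int : Integrable q := by
    have h1 : Integrable (fun r => l r * (Real.exp (-γ r) * p r)) := by
      refine integrable_mul_bdd hl0 hlint
        (((Real.continuous_exp.comp hγcont.neg).measurable).mul hpm).aestronglyMeasurable
        (D := Real.exp K * C) fun s => ?_
      rw [abs_mul, abs_of_nonneg (Real.exp_pos _).le]
      have hC0 : (0:ℝ) ≤ C := (abs_nonneg _).trans (hpC 0)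
      exact mul_le_mul (hexpγ' s) (hpC s) (abs_nonneg _) (Real.exp_pos _).le
    exact h1.congr (Eventually.of_forall fun r => by ring)
  set P : ℝ → ℝ := fun s => ∫ r in (0:ℝ)..s, q r with hPdef
  have hP_cont : Continuous P := hq_int.continuous_primitive 0
  set CP : ℝ := ∫ x, |q x| with hCP
  have hP_bd : ∀ s, |P s| ≤ CP := fun s => abs_intervalIntegral_le hq_int 0 s
  have hCP0 : 0 ≤ CP := integral_nonneg fun x => abs_nonneg _
  -- B
  set B : ℝ → ℝ := fun s => Real.exp (γ s) * P s with hBdef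
  have hB_cont : Continuous B := (Real.continuous_exp.comp hγcont).mul hP_cont
  have hB_bd : ∀ s, |B s| ≤ Real.exp K * CP := by
    intro s
    rw [hBdef]
    simp only
    rw [abs_mul, abs_of_nonneg (Real.exp_pos _).le]
    exact mul_le_mul (hexpγ s) (hP_bd s) (abs_nonneg _) (Real.exp_pos _).le
  have hB_eq : ∀ s : ℝ, 0 ≤ s → B s = ∫ r in (0:ℝ)..s,
      Real.exp (γ s - γ r) * (l r * p r) := by
    intro s hs
    show Real.exp (γ s) * P s = _
    rw [hPdef]
    simp only
    rw [← intervalIntegral.integral_const_mul]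
    apply intervalIntegral.integral_congr
    intro r _
    rw [hqdef]
    simp only
    rw [sub_eq_add_neg, Real.exp_add]
    ring
  -- integrability of l * u and l * B and l * p
  have hlp_int : Integrable (fun r => l r * p r) :=
    integrable_mul_bdd hl0 hlint hpm.aestronglyMeasurable hpC
  have hlu_int : Integrable (fun r => l r * u r) :=
    integrable_mul_bdd hl0 hlint hu_cont.aestronglyMeasurable hu_bd
  have hlB_int : Integrable (fun r => l r * B r) :=
    integrable_mul_bdd hl0 hlint hB_cont.aestronglyMeasurable hB_bd
  -- step 1
  have step1 : ∀ t ∈ Icc (0:ℝ) t₀, u t ≤ (∫ r in (0:ℝ)..t, l r * p r)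
      + ∫ r in (0:ℝ)..t, l r * u r := by
    intro t ht
    have hsum_int : Integrable (fun r => l r * p r + l r * u r) := hlp_int.add hlu_int
    have hmono2 : u t ≤ ∫ r in (0:ℝ)..t, (l r * p r + l r * u r) := by
      refine intervalIntegral.integral_mono_ae_restrict ht.1 hla_int.intervalIntegrable
        hsum_int.intervalIntegrable ?_
      have hyp' : ∀ᵐ s ∂(volume.restrict (Icc (0:ℝ) t)), a s ≤ p s + u s :=
        ae_mono (Measure.restrict_mono (Icc_subset_Icc le_rfl ht.2) le_rfl) hyp
      filter_upwards [hyp'] with s hs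
      calc l s * a s ≤ l s * (p s + u s) := mul_le_mul_of_nonneg_left hs (hl0 s)
        _ = l s * p s + l s * u s := by ring
    rw [intervalIntegral.integral_add hlp_int.intervalIntegrable
      hlu_int.intervalIntegrable] at hmono2
    exact hmono2
  -- step 2 : Fubini
  have step2 : ∀ t ∈ Icc (0:ℝ) t₀, (∫ r in (0:ℝ)..t, l r * B r)
      = B t - ∫ r in (0:ℝ)..t, l r * p r := by
    intro t ht
    have ht0 : (0:ℝ) ≤ t := ht.1
    set F : ℝ × ℝ → ℝ := fun z =>
      if z.2 ≤ z.1 then (l z.1 * Real.exp (γ z.1)) * q z.2 else 0 with hFdef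
    have hFmeas : Measurable F := by
      refine Measurable.ite (measurableSet_le measurable_snd measurable_fst) ?_ measurable_const
      exact ((hl.comp measurable_fst).mul
        ((Real.continuous_exp.comp hγcont).measurable.comp measurable_fst)).mul
        (hq_meas.comp measurable_snd)
    have hFint : Integrable F
        ((volume.restrict (Ioc (0:ℝ) t)).prod (volume.restrict (Ioc (0:ℝ) t))) := by
      have hC0 : (0:ℝ) ≤ C := (abs_nonneg _).trans (hpC 0)
      refine Integrable.mono'
        (g := fun z => (Real.exp K * l z.1) * ((Real.exp K * C) * l z.2)) ?_
        hFmeas.aestronglyMeasurable ?_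
      · exact (hlint.restrict.const_mul _).mul_prod (hlint.restrict.const_mul _)
      · filter_upwards with z
        rw [Real.norm_eq_abs]
        by_cases hz : z.2 ≤ z.1
        · have e1 : F z = (l z.1 * Real.exp (γ z.1)) * q z.2 := by rw [hFdef]; simp [hz]
          rw [e1]
          have hq_abs : |q z.2| ≤ (Real.exp K * C) * l z.2 := by
            rw [hqdef]
            simp only
            rw [abs_mul, abs_mul, abs_of_nonneg (Real.exp_pos _).le,
              abs_of_nonneg (hl0 _)]
            calc Real.exp (-γ z.2) * (l z.2 * |p z.2|)
                ≤ Real.exp K * (l z.2 * C) := by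
                  refine mul_le_mul (hexpγ' _) ?_ (mul_nonneg (hl0 _) (abs_nonneg _)) (Real.exp_pos _).le
                  exact mul_le_mul_of_nonneg_left (hpC _) (hl0 _)
              _ = (Real.exp K * C) * l z.2 := by ring
          rw [abs_mul]
          refine mul_le_mul ?_ hq_abs (abs_nonneg _) (mul_nonneg (Real.exp_pos _).le (hl0 _))
          rw [abs_mul, abs_of_nonneg (hl0 _), abs_of_nonneg (Real.exp_pos _).le]
          calc l z.1 * Real.exp (γ z.1) ≤ l z.1 * Real.exp K :=
                mul_le_mul_of_nonneg_left (hexpγ _) (hl0 _)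
            _ = Real.exp K * l z.1 := by ring
        · have e1 : F z = 0 := by rw [hFdef]; simp [hz]
          rw [e1]
          simp only [abs_zero]
          exact mul_nonneg (mul_nonneg (Real.exp_pos _).le (hl0 _))
            (mul_nonneg (mul_nonneg (Real.exp_pos _).le hC0) (hl0 _))
    have hswap : (∫ s in Ioc (0:ℝ) t, ∫ r in Ioc (0:ℝ) t, F (s, r))
        = ∫ r in Ioc (0:ℝ) t, ∫ s in Ioc (0:ℝ) t, F (s, r) :=
      MeasureTheory.integral_integral_swap (f := fun s r => F (s, r)) hFint
    have hLHS : (∫ s in Ioc (0:ℝ) t, l s * B s)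
        = ∫ s in Ioc (0:ℝ) t, ∫ r in Ioc (0:ℝ) t, F (s, r) := by
      refine setIntegral_congr_fun measurableSet_Ioc fun s hs => ?_
      have e1 : (fun r => F (s, r))
          = Set.indicator (Iic s) (fun r => (l s * Real.exp (γ s)) * q r) := by
        funext r
        rw [Set.indicator_apply]
        simp only [hFdef, Set.mem_Iic]
      rw [e1, MeasureTheory.integral_indicator measurableSet_Iic,
        Measure.restrict_restrict measurableSet_Iic]
      have e2 : Iic s ∩ Ioc 0 t = Ioc 0 s := by
        rw [Set.inter_comm, Set.Ioc_inter_Iic, min_eq_right hs.2]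
      have e3 : (∫ r in Ioc (0:ℝ) s, q r) = P s := by
        rw [hPdef]
        simp only
        rw [intervalIntegral.integral_of_le hs.1.le]
      rw [e2, MeasureTheory.integral_const_mul, e3]
      simp only [hBdef]
      ring
    have hRHS : (∫ r in Ioc (0:ℝ) t, ∫ s in Ioc (0:ℝ) t, F (s, r))
        = ∫ r in Ioc (0:ℝ) t, (Real.exp (γ t) - Real.exp (γ r)) * q r := by
      refine setIntegral_congr_fun measurableSet_Ioc fun r hr => ?_
      have e1 : (fun s => F (s, r))
          = Set.indicator (Ici r) (fun s => (l s * Real.exp (γ s)) * q r) := by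
        funext s
        rw [Set.indicator_apply]
        simp only [hFdef, Set.mem_Ici]
      rw [e1, MeasureTheory.integral_indicator measurableSet_Ici,
        Measure.restrict_restrict measurableSet_Ici]
      have e2 : Ici r ∩ Ioc 0 t = Icc r t := by
        ext x
        simp only [Set.mem_inter_iff, Set.mem_Ici, Set.mem_Ioc, Set.mem_Icc]
        constructor
        · rintro ⟨h1, _, h3⟩; exact ⟨h1, h3⟩
        · rintro ⟨h1, h2⟩; exact ⟨h1, lt_of_lt_of_le hr.1 h1, h2⟩
      rw [e2, integral_Icc_eq_integral_Ioc, MeasureTheory.integral_mul_const,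
        ← intervalIntegral.integral_of_le hr.2, expFTC r t hr.2]
    have hfinal : (∫ r in Ioc (0:ℝ) t, (Real.exp (γ t) - Real.exp (γ r)) * q r)
        = B t - ∫ r in (0:ℝ)..t, l r * p r := by
      have hint1 : Integrable (fun r => Real.exp (γ t - γ r) * (l r * p r)) := by
        have h1 : Integrable (fun r => l r * (Real.exp (γ t - γ r) * p r)) := by
          refine integrable_mul_bdd hl0 hlint
            ((Real.continuous_exp.comp (continuous_const.sub hγcont)).measurable.mul
              hpm).aestronglyMeasurable (D := Real.exp (K + K) * C) fun s => ?_
          rw [abs_mul, abs_of_nonneg (Real.exp_pos _).le]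
          have hC0 : (0:ℝ) ≤ C := (abs_nonneg _).trans (hpC 0)
          refine mul_le_mul ?_ (hpC s) (abs_nonneg _) (Real.exp_pos _).le
          refine Real.exp_le_exp.2 ?_
          have h2 := hγbd t
          have h3 := hγbd s
          rw [abs_le] at h2 h3
          have := h2.2
          have := h3.1
          linarith [h2.2, h3.1]
        exact h1.congr (Eventually.of_forall fun r => by ring)
      have e4 : (fun r => (Real.exp (γ t) - Real.exp (γ r)) * q r)
          = fun r => Real.exp (γ t - γ r) * (l r * p r) - l r * p r := by
        funext r
        rw [hqdef]
        simp only
        rw [sub_eq_add_neg (γ t), Real.exp_add]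
        have e5 : Real.exp (γ r) * Real.exp (-γ r) = 1 := by
          rw [← Real.exp_add, add_neg_cancel, Real.exp_zero]
        linear_combination (-(l r * p r)) * e5
      rw [e4, MeasureTheory.integral_sub hint1.restrict hlp_int.restrict]
      rw [← intervalIntegral.integral_of_le ht0, ← intervalIntegral.integral_of_le ht0,
        ← hB_eq t ht0]
    rw [intervalIntegral.integral_of_le ht0, hLHS, hswap, hRHS, hfinal]
  -- step 3
  have step3 : ∀ t ∈ Icc (0:ℝ) t₀, u t - B t ≤ ∫ r in (0:ℝ)..t, l r * (u r - B r) := by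
    intro t ht
    have e1 : (∫ r in (0:ℝ)..t, l r * (u r - B r))
        = (∫ r in (0:ℝ)..t, l r * u r) - ∫ r in (0:ℝ)..t, l r * B r := by
      rw [← intervalIntegral.integral_sub hlu_int.intervalIntegrable
        hlB_int.intervalIntegrable]
      apply intervalIntegral.integral_congr
      intro s _
      ring
    rw [e1, step2 t ht]
    have := step1 t ht
    linarith [this]
  -- homogeneous lemma
  have hw := lemH l (fun s => u s - B s) hl0 hlint t₀ ht₀ (hu_cont.sub hB_cont)
    (D := Cu + Real.exp K * CP) (fun s => (abs_sub _ _).trans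
      (add_le_add (hu_bd s) (hB_bd s))) step3
  have hfin : u t₀ ≤ B t₀ := by
    have hw2 : u t₀ - B t₀ ≤ 0 := hw
    linarith
  calc (∫ r in (0:ℝ)..t₀, l r * a r) = u t₀ := rfl
    _ ≤ B t₀ := hfin
    _ = _ := hB_eq t₀ ht₀

/-- Grönwall's lemma, integral form, general conclusion, on the interval `[0, T)`
with `T ∈ (0, ∞]` (encoded as `T : EReal` with `0 < T`). -/
theorem gronwall_integral_general
    (T : EReal) (hT : 0 < T)
    (α ψ lam : ℝ → ℝ)
    (S : Set ℝ) (hS : S = {t : ℝ | 0 ≤ t ∧ (t : EReal) < T})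
    (hα_meas : Measurable α) (hψ_meas : Measurable ψ)
    (hα_bdd : ∃ C : ℝ, ∀ᵐ t ∂(volume.restrict S), |α t| ≤ C)
    (hψ_bdd : ∃ C : ℝ, ∀ᵐ t ∂(volume.restrict S), |ψ t| ≤ C)
    (hlam_int : IntegrableOn lam S)
    (hlam_nonneg : ∀ᵐ t ∂(volume.restrict S), 0 ≤ lam t)
    (h : ∀ᵐ t ∂(volume.restrict S), α t ≤ ψ t + ∫ s in (0:ℝ)..t, lam s * α s) :
    ∀ᵐ t ∂(volume.restrict S),
      α t ≤ ψ t + ∫ s in (0:ℝ)..t,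
        Real.exp ((∫ τ in (0:ℝ)..t, lam τ) - (∫ τ in (0:ℝ)..s, lam τ)) * lam s * ψ s := by
  subst hS
  set S : Set ℝ := {t : ℝ | 0 ≤ t ∧ (t : EReal) < T} with hSdef
  have hSmeas : MeasurableSet S := by
    have e : S = Ici (0:ℝ) ∩ ((↑) : ℝ → EReal) ⁻¹' (Iio T) := rfl
    rw [e]
    exact measurableSet_Ici.inter (measurable_coe_real_ereal measurableSet_Iio)
  have hIccS : ∀ t ∈ S, Icc (0:ℝ) t ⊆ S := by
    intro t ht x hx
    exact ⟨hx.1, lt_of_le_of_lt (EReal.coe_le_coe_iff.2 hx.2) ht.2⟩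
  obtain ⟨Ca, hCa⟩ := hα_bdd
  obtain ⟨Cp, hCp⟩ := hψ_bdd
  set C : ℝ := max (max Ca Cp) 0 with hCdef
  have hC0 : (0:ℝ) ≤ C := le_max_right _ _
  have hCaC : Ca ≤ C := (le_max_left _ _).trans (le_max_left _ _)
  have hCpC : Cp ≤ C := (le_max_right _ _).trans (le_max_left _ _)
  set a : ℝ → ℝ := fun t => if |α t| ≤ C then α t else 0 with hadef
  set p : ℝ → ℝ := fun t => if |ψ t| ≤ C then ψ t else 0 with hpdef
  have ha_meas : Measurable a :=
    Measurable.ite (measurableSet_le hα_meas.abs measurable_const) hα_meas measurable_const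
  have hp_meas : Measurable p :=
    Measurable.ite (measurableSet_le hψ_meas.abs measurable_const) hψ_meas measurable_const
  have haC : ∀ s, |a s| ≤ C := by
    intro s
    rw [hadef]
    simp only
    split
    · assumption
    · simpa using hC0
  have hpC : ∀ s, |p s| ≤ C := by
    intro s
    rw [hpdef]
    simp only
    split
    · assumption
    · simpa using hC0
  have haα : ∀ᵐ t ∂(volume.restrict S), α t = a t := by
    filter_upwards [hCa] with t htC
    rw [hadef]
    simp only
    rw [if_pos (htC.trans hCaC)]
  have hpψ : ∀ᵐ t ∂(volume.restrict S), ψ t = p t := by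
    filter_upwards [hCp] with t htC
    rw [hpdef]
    simp only
    rw [if_pos (htC.trans hCpC)]
  -- measurable nonneg version of lam
  set l : ℝ → ℝ := fun s => max (hlam_int.1.mk lam s) 0 with hldef
  have hl_meas : Measurable l :=
    (hlam_int.1.stronglyMeasurable_mk.measurable).max measurable_const
  have hl0 : ∀ s, 0 ≤ l s := fun s => le_max_right _ _
  have hlaml : ∀ᵐ t ∂(volume.restrict S), lam t = l t := by
    filter_upwards [hlam_int.1.ae_eq_mk, hlam_nonneg] with t h1 h2
    rw [hldef]
    simp only
    rw [← h1, max_eq_left h2]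
  have hl_intS : IntegrableOn l S := hlam_int.congr hlaml
  -- pointwise (in S) conversions of interval integrals
  have haα' := (ae_restrict_iff' hSmeas).1 haα
  have hpψ' := (ae_restrict_iff' hSmeas).1 hpψ
  have hlaml' := (ae_restrict_iff' hSmeas).1 hlaml
  have hconv : ∀ s ∈ S, (∫ r in (0:ℝ)..s, lam r * α r) = ∫ r in (0:ℝ)..s, l r * a r := by
    intro s hs
    apply intervalIntegral.integral_congr_ae
    filter_upwards [haα', hlaml'] with x h1 h2 hx
    rw [uIoc_of_le hs.1] at hx
    have hxS : x ∈ S := hIccS s hs ⟨hx.1.le, hx.2⟩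
    rw [h1 hxS, h2 hxS]
  have hγconv : ∀ s ∈ S, (∫ τ in (0:ℝ)..s, lam τ) = ∫ τ in (0:ℝ)..s, l τ := by
    intro s hs
    apply intervalIntegral.integral_congr_ae
    filter_upwards [hlaml'] with x h2 hx
    rw [uIoc_of_le hs.1] at hx
    exact h2 (hIccS s hs ⟨hx.1.le, hx.2⟩)
  filter_upwards [h, ae_restrict_mem hSmeas] with t htineq htS
  -- indicator version of l, globally integrable
  set lt : ℝ → ℝ := (Icc (0:ℝ) t).indicator l with hltdef
  have hlt_meas : Measurable lt := hl_meas.indicator measurableSet_Icc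
  have hlt0 : ∀ s, 0 ≤ lt s := fun s => by
    rw [hltdef]
    exact Set.indicator_nonneg (fun x _ => hl0 x) s
  have hlt_int : Integrable lt :=
    (integrable_indicator_iff measurableSet_Icc).2 (hl_intS.mono_set (hIccS t htS))
  have hltl : ∀ b ∈ Icc (0:ℝ) t, ∀ f : ℝ → ℝ,
      (∫ r in (0:ℝ)..b, lt r * f r) = ∫ r in (0:ℝ)..b, l r * f r := by
    intro b hb f
    apply intervalIntegral.integral_congr
    intro x hx
    rw [uIcc_of_le hb.1] at hx
    have hxI : x ∈ Icc (0:ℝ) t := ⟨hx.1, hx.2.trans hb.2⟩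
    simp only [hltdef, Set.indicator_of_mem hxI]
  have hγlt : ∀ b ∈ Icc (0:ℝ) t, (∫ τ in (0:ℝ)..b, lt τ) = ∫ τ in (0:ℝ)..b, lam τ := by
    intro b hb
    have h1 : (∫ τ in (0:ℝ)..b, lt τ) = ∫ τ in (0:ℝ)..b, l τ := by
      apply intervalIntegral.integral_congr
      intro x hx
      rw [uIcc_of_le hb.1] at hx
      have hxI : x ∈ Icc (0:ℝ) t := ⟨hx.1, hx.2.trans hb.2⟩
      simp only [hltdef, Set.indicator_of_mem hxI]
    have hbS : b ∈ S := hIccS t htS hb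
    rw [h1, ← hγconv b hbS]
  -- hypothesis for the main lemma
  have hyp : ∀ᵐ s ∂(volume.restrict (Icc (0:ℝ) t)),
      a s ≤ p s + ∫ r in (0:ℝ)..s, lt r * a r := by
    have hres : volume.restrict (Icc (0:ℝ) t) ≤ volume.restrict S :=
      Measure.restrict_mono (hIccS t htS) le_rfl
    filter_upwards [ae_mono hres h, ae_mono hres haα, ae_mono hres hpψ,
      ae_restrict_mem measurableSet_Icc]
      with s hs1 hs2 hs3 hsI
    have hsS : s ∈ S := hIccS t htS hsI
    rw [← hs2, ← hs3, hltl s hsI a, ← hconv s hsS]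
    exact hs1
  have hmain := gronwall_main lt a p hlt_meas hlt0 hlt_int ha_meas hp_meas C haC hpC
    t htS.1 hyp
  -- convert the conclusion
  have hL : (∫ r in (0:ℝ)..t, lt r * a r) = ∫ r in (0:ℝ)..t, lam r * α r := by
    rw [hltl t ⟨htS.1, le_rfl⟩ a, ← hconv t htS]
  have hR : (∫ r in (0:ℝ)..t,
        Real.exp ((∫ τ in (0:ℝ)..t, lt τ) - (∫ τ in (0:ℝ)..r, lt τ)) * (lt r * p r))
      = ∫ s in (0:ℝ)..t,
        Real.exp ((∫ τ in (0:ℝ)..t, lam τ) - (∫ τ in (0:ℝ)..s, lam τ)) * lam s * ψ s := by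
    apply intervalIntegral.integral_congr_ae
    filter_upwards [hpψ', hlaml'] with x h1 h2 hx
    rw [uIoc_of_le htS.1] at hx
    have hxI : x ∈ Icc (0:ℝ) t := ⟨hx.1.le, hx.2⟩
    have hxS : x ∈ S := hIccS t htS hxI
    rw [hγlt t ⟨htS.1, le_rfl⟩, hγlt x hxI]
    have hlx : lt x = l x := by rw [hltdef]; exact Set.indicator_of_mem hxI l
    rw [hlx, ← h1 hxS, ← h2 hxS, mul_assoc]
  calc α t ≤ ψ t + ∫ s in (0:ℝ)..t, lam s * α s := htineq
    _ ≤ ψ t + ∫ s in (0:ℝ)..t,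
        Real.exp ((∫ τ in (0:ℝ)..t, lam τ) - (∫ τ in (0:ℝ)..s, lam τ)) * lam s * ψ s := by
      rw [← hL, ← hR]
      exact add_le_add le_rfl hmain
end

section
/- (Grönwall's lemma, integral form, W^{1,1} source.) Let T ∈ (0, ∞]. Let α : [0, T) → ℝ be essentially bounded measurable, λ : [0, T) → ℝ integrable with λ(t) ≥ 0 a.e., and let ψ : [0, T) → ℝ be absolutely continuous with integrable derivative, i.e. there is an integrable function ψ' with ψ(t) = ψ(0) + ∫₀ᵗ ψ'(s) ds for all t. Define γ(t) := ∫₀ᵗ λ(τ) dτ. If α(t) ≤ ψ(t) + ∫₀ᵗ λ(s) α(s) ds for almost every t, then for almost every t ∈ [0, T), α(t) ≤ e^{γ(t)} ( ψ(0) + ∫₀ᵗ e^{−γ(s)} ψ'(s) ds ). -/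
open MeasureTheory Filter Set
open intervalIntegral Nat

private lemma abs_primitive_le (g : ℝ → ℝ) (hg : Integrable g) (s : ℝ) :
    |∫ r in (0:ℝ)..s, g r| ≤ ∫ r, |g r| := by
  calc |∫ r in (0:ℝ)..s, g r| ≤ ∫ r in Set.uIoc (0:ℝ) s, |g r| := by
        simpa [Real.norm_eq_abs] using
          intervalIntegral.norm_integral_le_integral_norm_uIoc (a := (0:ℝ)) (b := s)
            (f := g) (μ := volume)
      _ ≤ ∫ r, |g r| :=
        setIntegral_le_integral hg.abs (Eventually.of_forall fun r => abs_nonneg _)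

private lemma int_mul_bdd (f g : ℝ → ℝ) (hf : Integrable f) (hg : Continuous g)
    (Cg : ℝ) (hb : ∀ s, |g s| ≤ Cg) : Integrable (fun s => f s * g s) := by
  refine (hf.abs.mul_const Cg).mono' (hf.1.mul hg.aestronglyMeasurable)
    (Eventually.of_forall fun s => ?_)
  rw [norm_mul, Real.norm_eq_abs, Real.norm_eq_abs]
  exact mul_le_mul_of_nonneg_left (hb s) (abs_nonneg _)

private lemma core_fubini (f g : ℝ → ℝ) (hf : Integrable f) (hg : Integrable g)
    (t : ℝ) :
    (∫ s in Ioc (0:ℝ) t, f s * ∫ r in Ioc (0:ℝ) s, g r)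
      + ∫ s in Ioc (0:ℝ) t, (∫ r in Ioc (0:ℝ) s, f r) * g s
    = (∫ s in Ioc (0:ℝ) t, f s) * ∫ s in Ioc (0:ℝ) t, g s := by
  set μ := volume.restrict (Ioc (0:ℝ) t) with hμ
  have hfμ : Integrable f μ := hf.restrict
  have hgμ : Integrable g μ := hg.restrict
  have hD1 : MeasurableSet {p : ℝ × ℝ | p.2 ≤ p.1} :=
    measurableSet_le measurable_snd measurable_fst
  have hD2 : MeasurableSet {p : ℝ × ℝ | p.1 ≤ p.2} :=
    measurableSet_le measurable_fst measurable_snd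
  have hFG : Integrable (fun p : ℝ × ℝ => f p.1 * g p.2) (μ.prod μ) := hfμ.mul_prod hgμ
  have hΦ1 : Integrable ({p : ℝ × ℝ | p.2 ≤ p.1}.indicator fun p => f p.1 * g p.2)
      (μ.prod μ) := hFG.indicator hD1
  have hΦ2 : Integrable ({p : ℝ × ℝ | p.1 ≤ p.2}.indicator fun p => f p.1 * g p.2)
      (μ.prod μ) := hFG.indicator hD2
  have e1 : ∫ p, ({p : ℝ × ℝ | p.2 ≤ p.1}.indicator fun p => f p.1 * g p.2) p ∂(μ.prod μ)
      = ∫ s in Ioc (0:ℝ) t, f s * ∫ r in Ioc (0:ℝ) s, g r := by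
    rw [integral_prod _ hΦ1]
    refine setIntegral_congr_fun measurableSet_Ioc (fun s hs => ?_)
    have hcur : (fun r => ({p : ℝ × ℝ | p.2 ≤ p.1}.indicator fun p => f p.1 * g p.2) (s, r))
        = (Iic s).indicator (fun r => f s * g r) := by
      funext r; by_cases hr : r ≤ s <;> simp [Set.indicator, hr]
    rw [hcur, MeasureTheory.integral_indicator measurableSet_Iic, hμ,
      Measure.restrict_restrict measurableSet_Iic]
    have hset : Iic s ∩ Ioc 0 t = Ioc 0 s := by
      ext r
      constructor
      · rintro ⟨h1, h2, _⟩; exact ⟨h2, h1⟩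
      · rintro ⟨h1, h2⟩; exact ⟨h2, h1, h2.trans hs.2⟩
    rw [hset, MeasureTheory.integral_const_mul]
  have e2 : ∫ p, ({p : ℝ × ℝ | p.1 ≤ p.2}.indicator fun p => f p.1 * g p.2) p ∂(μ.prod μ)
      = ∫ s in Ioc (0:ℝ) t, (∫ r in Ioc (0:ℝ) s, f r) * g s := by
    rw [integral_prod_symm _ hΦ2]
    refine setIntegral_congr_fun measurableSet_Ioc (fun s hs => ?_)
    have hcur : (fun r => ({p : ℝ × ℝ | p.1 ≤ p.2}.indicator fun p => f p.1 * g p.2) (r, s))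
        = (Iic s).indicator (fun r => f r * g s) := by
      funext r; by_cases hr : r ≤ s <;> simp [Set.indicator, hr]
    rw [hcur, MeasureTheory.integral_indicator measurableSet_Iic, hμ,
      Measure.restrict_restrict measurableSet_Iic]
    have hset : Iic s ∩ Ioc 0 t = Ioc 0 s := by
      ext r
      constructor
      · rintro ⟨h1, h2, _⟩; exact ⟨h2, h1⟩
      · rintro ⟨h1, h2⟩; exact ⟨h2, h1, h2.trans hs.2⟩
    rw [hset, MeasureTheory.integral_mul_const]
  have hdiag : (μ.prod μ) {p : ℝ × ℝ | p.1 = p.2} = 0 := by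
    have hm : MeasurableSet {p : ℝ × ℝ | p.1 = p.2} :=
      (isClosed_eq continuous_fst continuous_snd).measurableSet
    rw [Measure.prod_apply hm]
    have hz : ∀ s : ℝ, μ (Prod.mk s ⁻¹' {p : ℝ × ℝ | p.1 = p.2}) = 0 := by
      intro s
      have hps : Prod.mk s ⁻¹' {p : ℝ × ℝ | p.1 = p.2} = {s} := by
        ext r; simp [eq_comm]
      rw [hps, hμ, Measure.restrict_apply (measurableSet_singleton s)]
      exact measure_mono_null inter_subset_left (measure_singleton s)
    simp [hz]
  have hae : ∀ᵐ p ∂(μ.prod μ),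
      ({p : ℝ × ℝ | p.2 ≤ p.1}.indicator fun p => f p.1 * g p.2) p
        + ({p : ℝ × ℝ | p.1 ≤ p.2}.indicator fun p => f p.1 * g p.2) p
      = f p.1 * g p.2 := by
    have hne : ∀ᵐ p ∂(μ.prod μ), p.1 ≠ p.2 := by
      rw [ae_iff]
      simpa [not_not] using hdiag
    filter_upwards [hne] with p hp
    rcases lt_or_gt_of_ne hp with hlt | hgt
    · simp [Set.indicator, not_le.mpr hlt, hlt.le]
    · simp [Set.indicator, not_le.mpr hgt, hgt.le]
  rw [← e1, ← e2, ← integral_add hΦ1 hΦ2, integral_congr_ae hae, integral_prod_mul]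

private lemma prod_rule (f g : ℝ → ℝ) (hf : Integrable f) (hg : Integrable g)
    (c d t : ℝ) (ht : 0 ≤ t) :
    (c + ∫ s in (0:ℝ)..t, f s) * (d + ∫ s in (0:ℝ)..t, g s)
      = c * d + ∫ s in (0:ℝ)..t,
          (f s * (d + ∫ r in (0:ℝ)..s, g r) + (c + ∫ r in (0:ℝ)..s, f r) * g s) := by
  have hFc : Continuous (fun s => c + ∫ r in (0:ℝ)..s, f r) :=
    continuous_const.add (hf.continuous_primitive 0)
  have hGc : Continuous (fun s => d + ∫ r in (0:ℝ)..s, g r) :=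
    continuous_const.add (hg.continuous_primitive 0)
  have hFb : ∀ s, |c + ∫ r in (0:ℝ)..s, f r| ≤ |c| + ∫ r, |f r| := fun s =>
    (abs_add_le _ _).trans (by gcongr; exact abs_primitive_le f hf s)
  have hGb : ∀ s, |d + ∫ r in (0:ℝ)..s, g r| ≤ |d| + ∫ r, |g r| := fun s =>
    (abs_add_le _ _).trans (by gcongr; exact abs_primitive_le g hg s)
  have hfG : Integrable (fun s => f s * (d + ∫ r in (0:ℝ)..s, g r)) :=
    int_mul_bdd f _ hf hGc _ hGb
  have hFg : Integrable (fun s => (c + ∫ r in (0:ℝ)..s, f r) * g s) := by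
    have := int_mul_bdd g _ hg hFc _ hFb
    simpa [mul_comm] using this
  have hsplit : ∫ s in (0:ℝ)..t,
        (f s * (d + ∫ r in (0:ℝ)..s, g r) + (c + ∫ r in (0:ℝ)..s, f r) * g s)
      = (∫ s in (0:ℝ)..t, f s * (d + ∫ r in (0:ℝ)..s, g r))
        + ∫ s in (0:ℝ)..t, (c + ∫ r in (0:ℝ)..s, f r) * g s :=
    integral_add hfG.intervalIntegrable hFg.intervalIntegrable
  have hsplit1 : ∫ s in (0:ℝ)..t, f s * (d + ∫ r in (0:ℝ)..s, g r)
      = d * (∫ s in (0:ℝ)..t, f s) + ∫ s in (0:ℝ)..t, f s * (∫ r in (0:ℝ)..s, g r) := by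
    have : ∀ s, f s * (d + ∫ r in (0:ℝ)..s, g r)
        = f s * d + f s * (∫ r in (0:ℝ)..s, g r) := fun s => by ring
    rw [integral_congr (fun s _ => this s),
      integral_add (hf.intervalIntegrable.mul_const d)
        ((int_mul_bdd f _ hf (hg.continuous_primitive 0) _ (abs_primitive_le g hg)).intervalIntegrable),
      intervalIntegral.integral_mul_const]
    ring
  have hsplit2 : ∫ s in (0:ℝ)..t, (c + ∫ r in (0:ℝ)..s, f r) * g s
      = c * (∫ s in (0:ℝ)..t, g s) + ∫ s in (0:ℝ)..t, (∫ r in (0:ℝ)..s, f r) * g s := by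
    have : ∀ s, (c + ∫ r in (0:ℝ)..s, f r) * g s
        = c * g s + (∫ r in (0:ℝ)..s, f r) * g s := fun s => by ring
    have hint : Integrable (fun s => (∫ r in (0:ℝ)..s, f r) * g s) := by
      have := int_mul_bdd g _ hg (hf.continuous_primitive 0) _ (abs_primitive_le f hf)
      simpa [mul_comm] using this
    rw [integral_congr (fun s _ => this s),
      integral_add (hg.intervalIntegrable.const_mul c) hint.intervalIntegrable,
      intervalIntegral.integral_const_mul]
  have hcore : (∫ s in (0:ℝ)..t, f s * (∫ r in (0:ℝ)..s, g r))
        + ∫ s in (0:ℝ)..t, (∫ r in (0:ℝ)..s, f r) * g s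
      = (∫ s in (0:ℝ)..t, f s) * ∫ s in (0:ℝ)..t, g s := by
    have e1 : ∫ s in (0:ℝ)..t, f s * (∫ r in (0:ℝ)..s, g r)
        = ∫ s in Ioc (0:ℝ) t, f s * ∫ r in Ioc (0:ℝ) s, g r := by
      rw [integral_of_le ht]
      exact setIntegral_congr_fun measurableSet_Ioc fun s hs => by
        rw [integral_of_le hs.1.le]
    have e2 : ∫ s in (0:ℝ)..t, (∫ r in (0:ℝ)..s, f r) * g s
        = ∫ s in Ioc (0:ℝ) t, (∫ r in Ioc (0:ℝ) s, f r) * g s := by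
      rw [integral_of_le ht]
      exact setIntegral_congr_fun measurableSet_Ioc fun s hs => by
        rw [integral_of_le hs.1.le]
    rw [e1, e2, core_fubini f g hf hg t, integral_of_le ht, integral_of_le ht]
  rw [hsplit, hsplit1, hsplit2]
  nlinarith [hcore]

private lemma hasSum_exp_div (x : ℝ) : HasSum (fun n : ℕ => x ^ n / n !) (Real.exp x) := by
  have := NormedSpace.exp_series_hasSum_exp' (𝕂 := ℝ) x
  rw [← Real.exp_eq_exp_ℝ] at this
  simpa [div_eq_inv_mul, smul_eq_mul] using this

set_option maxHeartbeats 1000000 in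
private lemma exp_primitive (l : ℝ → ℝ) (hl : Integrable l) (t : ℝ) (ht : 0 ≤ t) :
    Real.exp (-(∫ τ in (0:ℝ)..t, l τ))
      = 1 - ∫ s in (0:ℝ)..t, l s * Real.exp (-(∫ τ in (0:ℝ)..s, l τ)) := by
  set γ : ℝ → ℝ := fun s => ∫ τ in (0:ℝ)..s, l τ with hγdef
  have hγc : Continuous γ := hl.continuous_primitive 0
  set M : ℝ := ∫ τ, |l τ| with hM
  have hγb : ∀ s, |γ s| ≤ M := fun s => abs_primitive_le l hl s
  have hpow : ∀ n : ℕ, Integrable (fun s => l s * γ s ^ n) := fun n =>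
    int_mul_bdd l _ hl (hγc.pow n) (M ^ n) fun s => by
      rw [abs_pow]
      exact pow_le_pow_left₀ (abs_nonneg _) (hγb s) n
  -- moment identities
  have moments : ∀ n : ℕ, ∀ u : ℝ, 0 ≤ u →
      ∫ s in (0:ℝ)..u, l s * γ s ^ n = γ u ^ (n + 1) / (n + 1) := by
    intro n
    induction n with
    | zero => intro u hu; simp [hγdef]
    | succ n ih =>
      intro u hu
      have hkey := prod_rule l (fun s => l s * γ s ^ n) hl (hpow n) 0 0 u hu
      simp only [zero_add, zero_mul, mul_zero] at hkey
      rw [ih u hu] at hkey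
      have hrw : ∫ s in (0:ℝ)..u,
            (l s * (∫ r in (0:ℝ)..s, l r * γ r ^ n) + γ s * (l s * γ s ^ n))
          = ∫ s in (0:ℝ)..u, ((1 / (n + 1) + 1) * (l s * γ s ^ (n + 1))) := by
        rw [integral_of_le hu, integral_of_le hu]
        refine setIntegral_congr_fun measurableSet_Ioc fun s hs => ?_
        rw [ih s hs.1.le]
        ring
      rw [hrw, intervalIntegral.integral_const_mul] at hkey
      have hne1 : (n : ℝ) + 1 ≠ 0 := by positivity
      have hne2 : (n : ℝ) + 2 ≠ 0 := by positivity
      have hγu : (∫ s in (0:ℝ)..u, l s) = γ u := rfl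
      rw [hγu] at hkey
      set I := ∫ s in (0:ℝ)..u, l s * γ s ^ (n + 1) with hI
      have hkey' : γ u ^ (n + 2) = ((n : ℝ) + 2) * I := by
        have h3 : ((n : ℝ) + 1) * (γ u * (γ u ^ (n + 1) / ((n : ℝ) + 1))) = γ u ^ (n + 2) := by
          field_simp; ring
        have h4 : ((n : ℝ) + 1) * ((1 / ((n : ℝ) + 1) + 1) * I) = ((n : ℝ) + 2) * I := by
          have : (1 / ((n : ℝ) + 1) + 1) = ((n : ℝ) + 2) / ((n : ℝ) + 1) := by
            field_simp; ring
          rw [this]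
          field_simp
        rw [← h3, hkey, h4]
      have h2 : I = γ u ^ (n + 2) / ((n : ℝ) + 2) := by
        rw [hkey']; field_simp
      rw [h2]
      push_cast
      ring_nf
  -- summation
  set μ := volume.restrict (Ioc (0:ℝ) t) with hμ
  have hW : HasSum (fun n : ℕ => ∫ s, l s * ((-γ s) ^ n / n !) ∂μ)
      (∫ s, l s * Real.exp (-γ s) ∂μ) := by
    refine hasSum_integral_of_dominated_convergence
      (bound := fun n s => |l s| * (M ^ n / n !))
      (fun n => (hl.restrict.1.mul
        (((hγc.neg.pow n).div_const _).aestronglyMeasurable))) ?_ ?_ ?_ ?_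
    · intro n
      refine Eventually.of_forall fun s => ?_
      rw [norm_mul, Real.norm_eq_abs, Real.norm_eq_abs]
      refine mul_le_mul_of_nonneg_left ?_ (abs_nonneg _)
      rw [abs_div, abs_pow, abs_neg, Nat.abs_cast]
      have hM0 : 0 ≤ M := integral_nonneg fun τ => abs_nonneg _
      exact div_le_div₀ (pow_nonneg hM0 n) (pow_le_pow_left₀ (abs_nonneg _) (hγb s) n)
        (by exact_mod_cast Nat.factorial_pos n) le_rfl
    · refine Eventually.of_forall fun s => ?_
      exact ((Real.summable_pow_div_factorial M).mul_left _)
    · have : (fun s => ∑' n : ℕ, |l s| * (M ^ n / n !)) = fun s => |l s| * Real.exp M := by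
        funext s
        rw [tsum_mul_left, (hasSum_exp_div M).tsum_eq]
      rw [this]
      exact (hl.abs.mul_const _).restrict
    · refine Eventually.of_forall fun s => ?_
      exact (hasSum_exp_div (-γ s)).mul_left _
  have hval : ∀ n : ℕ, ∫ s, l s * ((-γ s) ^ n / n !) ∂μ
      = -((-γ t) ^ (n + 1) / (Nat.factorial (n + 1) : ℝ)) := by
    intro n
    have : ∀ s : ℝ, l s * ((-γ s) ^ n / n !) = ((-1 : ℝ) ^ n / n !) * (l s * γ s ^ n) := by
      intro s; rw [neg_pow]; ring
    rw [integral_congr_ae (Eventually.of_forall fun s => this s), MeasureTheory.integral_const_mul]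
    have : ∫ s, l s * γ s ^ n ∂μ = γ t ^ (n + 1) / (n + 1) := by
      rw [hμ, ← integral_of_le ht]
      exact moments n t ht
    rw [this, neg_pow, Nat.factorial_succ]
    push_cast
    field_simp
    ring
  have hshift : HasSum (fun n : ℕ => -((-γ t) ^ (n + 1) / (Nat.factorial (n + 1) : ℝ)))
      (1 - Real.exp (-γ t)) := by
    have h1 : HasSum (fun n : ℕ => (-γ t) ^ (n + 1) / (Nat.factorial (n + 1) : ℝ)) (Real.exp (-γ t) - 1) := by
      refine (hasSum_nat_add_iff (f := fun n : ℕ => (-γ t) ^ n / n !) 1).mpr ?_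
      simpa using hasSum_exp_div (-γ t)
    simpa using h1.neg
  have hsum := hW
  simp_rw [hval] at hsum
  have hint : ∫ s, l s * Real.exp (-γ s) ∂μ = 1 - Real.exp (-γ t) := hsum.unique hshift
  have hfin : ∫ s in (0:ℝ)..t, l s * Real.exp (-γ s) = 1 - Real.exp (-γ t) := by
    rw [integral_of_le ht]; exact hint
  rw [hfin]
  have hee : Real.exp (-∫ τ in (0:ℝ)..t, l τ) = Real.exp (-γ t) := rfl
  rw [hee]; ring
/-- Grönwall's lemma, integral form, with a `W^{1,1}` source `ψ`, on the interval
`[0, T)` with `T ∈ (0, ∞]` (encoded as `T : EReal` with `0 < T`). -/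
theorem gronwall_integral_W11_source
    (T : EReal) (hT : 0 < T)
    (α ψ ψ' lam : ℝ → ℝ)
    (S : Set ℝ) (hS : S = {t : ℝ | 0 ≤ t ∧ (t : EReal) < T})
    (hα_meas : Measurable α)
    (hα_bdd : ∃ C : ℝ, ∀ᵐ t ∂(volume.restrict S), |α t| ≤ C)
    (hlam_int : IntegrableOn lam S)
    (hlam_nonneg : ∀ᵐ t ∂(volume.restrict S), 0 ≤ lam t)
    (hψ'_int : IntegrableOn ψ' S)
    (hψ_ac : ∀ t ∈ S, ψ t = ψ 0 + ∫ s in (0:ℝ)..t, ψ' s)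
    (h : ∀ᵐ t ∂(volume.restrict S), α t ≤ ψ t + ∫ s in (0:ℝ)..t, lam s * α s) :
    ∀ᵐ t ∂(volume.restrict S),
      α t ≤ Real.exp (∫ τ in (0:ℝ)..t, lam τ)
        * (ψ 0 + ∫ s in (0:ℝ)..t, Real.exp (-(∫ τ in (0:ℝ)..s, lam τ)) * ψ' s) := by
  obtain ⟨C, hC⟩ := hα_bdd
  have hS_meas : MeasurableSet S := by
    rw [hS]
    have : {t : ℝ | 0 ≤ t ∧ (t : EReal) < T}
        = Ici (0:ℝ) ∩ (fun t : ℝ => (t : EReal)) ⁻¹' Iio T := rfl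
    rw [this]
    exact measurableSet_Ici.inter (measurable_coe_real_ereal measurableSet_Iio)
  filter_upwards [h, ae_restrict_mem hS_meas] with t hht htS
  have ht0 : 0 ≤ t := by rw [hS] at htS; exact htS.1
  have htT : (t : EReal) < T := by rw [hS] at htS; exact htS.2
  have hsub : Ioc (0:ℝ) t ⊆ S := by
    intro s hs
    rw [hS, Set.mem_setOf_eq]
    exact ⟨hs.1.le, lt_of_le_of_lt (EReal.coe_le_coe_iff.mpr hs.2) htT⟩
  have hres : ∀ {prop : ℝ → Prop}, (∀ᵐ s ∂volume.restrict S, prop s) →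
      ∀ᵐ s ∂volume.restrict (Ioc (0:ℝ) t), prop s :=
    fun hp => ae_restrict_of_ae_restrict_of_subset hsub hp
  -- truncations
  set l : ℝ → ℝ := (Ioc (0:ℝ) t).indicator lam with hl_def
  set q : ℝ → ℝ := (Ioc (0:ℝ) t).indicator (fun s => lam s * α s) with hq_def
  set p : ℝ → ℝ := (Ioc (0:ℝ) t).indicator ψ' with hp_def
  have hlam_Ioc : IntegrableOn lam (Ioc 0 t) := hlam_int.mono_set hsub
  have hl_int : Integrable l := by
    rw [hl_def, integrable_indicator_iff measurableSet_Ioc]; exact hlam_Ioc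
  have hψ'_Ioc : IntegrableOn ψ' (Ioc 0 t) := hψ'_int.mono_set hsub
  have hp_int : Integrable p := by
    rw [hp_def, integrable_indicator_iff measurableSet_Ioc]; exact hψ'_Ioc
  have hq_Ioc : IntegrableOn (fun s => lam s * α s) (Ioc 0 t) := by
    refine (hlam_Ioc.abs.mul_const C).mono'
      (hlam_Ioc.1.mul hα_meas.aestronglyMeasurable.restrict) ?_
    filter_upwards [hres hC] with s hs
    rw [norm_mul, Real.norm_eq_abs, Real.norm_eq_abs]
    exact mul_le_mul_of_nonneg_left hs (abs_nonneg _)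
  have hq_int : Integrable q := by
    rw [hq_def, integrable_indicator_iff measurableSet_Ioc]; exact hq_Ioc
  -- primitives
  set γ : ℝ → ℝ := fun s => ∫ τ in (0:ℝ)..s, l τ with hγ_def
  set W : ℝ → ℝ := fun s => Real.exp (-(γ s)) with hW_def
  set B : ℝ → ℝ := fun s => ∫ r in (0:ℝ)..s, q r with hB_def
  set Ψ : ℝ → ℝ := fun s => ψ 0 + ∫ r in (0:ℝ)..s, p r with hΨ_def
  -- indicator primitives agree
  have hind : ∀ (f : ℝ → ℝ) (u : ℝ), 0 ≤ u → u ≤ t →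
      (∫ r in (0:ℝ)..u, (Ioc (0:ℝ) t).indicator f r) = ∫ r in (0:ℝ)..u, f r := by
    intro f u hu0 hut
    rw [intervalIntegral.integral_of_le hu0, intervalIntegral.integral_of_le hu0]
    refine setIntegral_congr_fun measurableSet_Ioc fun r hr => ?_
    exact Set.indicator_of_mem (show r ∈ Ioc (0:ℝ) t from ⟨hr.1, hr.2.trans hut⟩) f
  have hγ_eq : ∀ u, 0 ≤ u → u ≤ t → γ u = ∫ τ in (0:ℝ)..u, lam τ := by
    intro u h1 h2
    rw [hγ_def]
    simp only
    rw [hl_def, hind lam u h1 h2]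
  have hB_eq : ∀ u, 0 ≤ u → u ≤ t → B u = ∫ r in (0:ℝ)..u, lam r * α r := by
    intro u h1 h2
    rw [hB_def]
    simp only
    rw [hq_def, hind _ u h1 h2]
  have hΨ_eq : ∀ u, 0 ≤ u → u ≤ t → Ψ u = ψ 0 + ∫ r in (0:ℝ)..u, ψ' r := by
    intro u h1 h2
    rw [hΨ_def]
    simp only
    rw [hp_def, hind ψ' u h1 h2]
  -- continuity and bounds
  have hγc : Continuous γ := hl_int.continuous_primitive 0
  have hWc : Continuous W := Real.continuous_exp.comp hγc.neg
  set M : ℝ := ∫ τ, |l τ| with hM_def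
  have hγb : ∀ s, |γ s| ≤ M := fun s => abs_primitive_le l hl_int s
  have hW_pos : ∀ s, 0 < W s := fun s => Real.exp_pos _
  have hW_le : ∀ s, |W s| ≤ Real.exp M := by
    intro s
    rw [abs_of_pos (hW_pos s)]
    exact Real.exp_le_exp.mpr (by nlinarith [abs_le.mp (hγb s)])
  have hBc : Continuous B := hq_int.continuous_primitive 0
  have hBb : ∀ s, |B s| ≤ ∫ r, |q r| := fun s => abs_primitive_le q hq_int s
  have hΨc : Continuous Ψ := continuous_const.add (hp_int.continuous_primitive 0)
  have hΨb : ∀ s, |Ψ s| ≤ |ψ 0| + ∫ r, |p r| := fun s =>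
    (abs_add_le _ _).trans (by gcongr; exact abs_primitive_le p hp_int s)
  have hlW_int : Integrable (fun s => l s * W s) := int_mul_bdd l W hl_int hWc _ hW_le
  have hv_int : Integrable (fun s => -(l s * W s)) := hlW_int.neg
  -- the exponential is the primitive of -l*W
  have hW_eq : ∀ u, 0 ≤ u → W u = 1 + ∫ s in (0:ℝ)..u, -(l s * W s) := by
    intro u hu
    have hE := exp_primitive l hl_int u hu
    rw [intervalIntegral.integral_neg, ← sub_eq_add_neg]
    exact hE
  -- integrability of the various products
  have hqW_int : Integrable (fun s => q s * W s) := int_mul_bdd q W hq_int hWc _ hW_le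
  have hpW_int : Integrable (fun s => p s * W s) := int_mul_bdd p W hp_int hWc _ hW_le
  have hM0 : (0:ℝ) ≤ ∫ r, |q r| := integral_nonneg fun r => abs_nonneg _
  have hBlW_int : Integrable (fun s => B s * (l s * W s)) := by
    have h1 : Integrable (fun s => l s * (B s * W s)) := by
      refine int_mul_bdd l _ hl_int (hBc.mul hWc) ((∫ r, |q r|) * Real.exp M) fun s => ?_
      rw [abs_mul]
      exact mul_le_mul (hBb s) (hW_le s) (abs_nonneg _) hM0
    refine h1.congr (Eventually.of_forall fun s => by ring)
  have hΨlW_int : Integrable (fun s => Ψ s * (l s * W s)) := by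
    have h1 : Integrable (fun s => l s * (Ψ s * W s)) := by
      refine int_mul_bdd l _ hl_int (hΨc.mul hWc) ((|ψ 0| + ∫ r, |p r|) * Real.exp M) fun s => ?_
      rw [abs_mul]
      exact mul_le_mul (hΨb s) (hW_le s) (abs_nonneg _)
        (le_trans (abs_nonneg _) (hΨb s))
    refine h1.congr (Eventually.of_forall fun s => by ring)
  -- Step C : B t * W t = ∫ (q W - B l W)
  have hCt : B t * W t = ∫ s in Ioc (0:ℝ) t, (q s * W s - B s * (l s * W s)) := by
    have hstepC := prod_rule q (fun s => -(l s * W s)) hq_int hv_int 0 1 t ht0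
    simp only [zero_add, zero_mul] at hstepC
    have hBt_rfl : (∫ r in (0:ℝ)..t, q r) = B t := rfl
    rw [hBt_rfl, ← hW_eq t ht0, intervalIntegral.integral_of_le ht0] at hstepC
    rw [hstepC]
    refine setIntegral_congr_fun measurableSet_Ioc fun s hs => ?_
    rw [← hW_eq s hs.1.le]
    have hBs_rfl : (∫ r in (0:ℝ)..s, q r) = B s := rfl
    rw [hBs_rfl]
    ring
  -- Step D : Ψ t * W t = ψ 0 + ∫ (p W - Ψ l W)
  have hDt : Ψ t * W t = ψ 0 + ∫ s in Ioc (0:ℝ) t, (p s * W s - Ψ s * (l s * W s)) := by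
    have hstepD := prod_rule p (fun s => -(l s * W s)) hp_int hv_int (ψ 0) 1 t ht0
    rw [mul_one] at hstepD
    have hΨt_rfl : (ψ 0 + ∫ r in (0:ℝ)..t, p r) = Ψ t := rfl
    rw [hΨt_rfl, ← hW_eq t ht0, intervalIntegral.integral_of_le ht0] at hstepD
    rw [hstepD]
    congr 1
    refine setIntegral_congr_fun measurableSet_Ioc fun s hs => ?_
    rw [← hW_eq s hs.1.le]
    have hΨs_rfl : (ψ 0 + ∫ r in (0:ℝ)..s, p r) = Ψ s := rfl
    rw [hΨs_rfl]
    ring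
  -- Monotonicity
  have hmono : ∫ s in Ioc (0:ℝ) t, (q s * W s - B s * (l s * W s))
      ≤ ∫ s in Ioc (0:ℝ) t, Ψ s * (l s * W s) := by
    refine integral_mono_ae (hqW_int.sub hBlW_int).restrict hΨlW_int.restrict ?_
    filter_upwards [hres h, hres hlam_nonneg, ae_restrict_mem measurableSet_Ioc]
      with s hs hl0 hsIoc
    have hl_eq : l s = lam s := by rw [hl_def]; exact Set.indicator_of_mem hsIoc lam
    have hq_eq : q s = lam s * α s := by rw [hq_def]; exact Set.indicator_of_mem hsIoc _
    have hlW0 : 0 ≤ l s * W s := mul_nonneg (hl_eq ▸ hl0) (hW_pos s).le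
    have hαs : α s ≤ Ψ s + B s := by
      rw [hψ_ac s (hsub hsIoc)] at hs
      rw [hΨ_eq s hsIoc.1.le hsIoc.2, hB_eq s hsIoc.1.le hsIoc.2]
      linarith
    have hqWs : q s * W s = α s * (l s * W s) := by rw [hq_eq, hl_eq]; ring
    nlinarith [mul_le_mul_of_nonneg_right hαs hlW0]
  -- combine
  have hsplitD : ∫ s in Ioc (0:ℝ) t, (p s * W s - Ψ s * (l s * W s))
      = (∫ s in Ioc (0:ℝ) t, p s * W s) - ∫ s in Ioc (0:ℝ) t, Ψ s * (l s * W s) :=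
    integral_sub hpW_int.restrict hΨlW_int.restrict
  have hkey : (B t + Ψ t) * W t ≤ ψ 0 + ∫ s in Ioc (0:ℝ) t, p s * W s := by
    have hexpand : (B t + Ψ t) * W t = B t * W t + Ψ t * W t := by ring
    rw [hexpand, hCt, hDt, hsplitD]
    linarith [hmono]
  -- final assembly
  have hψt : ψ t = Ψ t := by
    rw [hψ_ac t htS, hΨ_eq t ht0 le_rfl]
  have hαt : α t ≤ Ψ t + B t := by
    have hBt : B t = ∫ r in (0:ℝ)..t, lam r * α r := hB_eq t ht0 le_rfl
    rw [hψt] at hht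
    rw [hBt]
    linarith [hht]
  have hγt : ∫ τ in (0:ℝ)..t, lam τ = γ t := (hγ_eq t ht0 le_rfl).symm
  have hIp : ∫ s in (0:ℝ)..t, Real.exp (-(∫ τ in (0:ℝ)..s, lam τ)) * ψ' s
      = ∫ s in Ioc (0:ℝ) t, p s * W s := by
    rw [intervalIntegral.integral_of_le ht0]
    refine setIntegral_congr_fun measurableSet_Ioc fun s hs => ?_
    have hp_eq : p s = ψ' s := by rw [hp_def]; exact Set.indicator_of_mem hs ψ'
    have hWs : Real.exp (-(∫ τ in (0:ℝ)..s, lam τ)) = W s := by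
      rw [← hγ_eq s hs.1.le hs.2]
    rw [hWs, hp_eq, mul_comm]
  rw [hγt, hIp]
  have hprod : Real.exp (γ t) * W t = 1 := by
    rw [hW_def]
    simp only
    rw [← Real.exp_add]
    simp
  have hmul := mul_le_mul_of_nonneg_left hkey (Real.exp_pos (γ t)).le
  have e1 : B t * (Real.exp (γ t) * W t) = B t := by rw [hprod, mul_one]
  have e2 : Ψ t * (Real.exp (γ t) * W t) = Ψ t := by rw [hprod, mul_one]
  nlinarith [hmul, e1, e2, hαt]
end

section
/- (Grönwall's lemma, integral form, monotone source.) Let T ∈ (0, ∞]. Let α : [0, T) → ℝ be essentially bounded measurable, λ : [0, T) → ℝ integrable with λ(t) ≥ 0 a.e., and let ψ : [0, T) → ℝ be monotone increasing and continuous. Define γ(t) := ∫₀ᵗ λ(τ) dτ. If α(t) ≤ ψ(t) + ∫₀ᵗ λ(s) α(s) ds for almost every t ∈ [0, T), then for almost every t ∈ [0, T), α(t) ≤ e^{γ(t)} ψ(t). -/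
open MeasureTheory Filter Set

namespace GronwallAux

noncomputable def prim (g : ℝ → ℝ) (t : ℝ) : ℝ := ∫ s in (0:ℝ)..t, g s

variable {g : ℝ → ℝ}

lemma prim_mono (hint : Integrable g) (hg : ∀ s, 0 ≤ g s) : Monotone (prim g) := by
  intro a b hab
  have h1 : IntervalIntegrable g volume a b := hint.intervalIntegrable
  have h2 : prim g b - prim g a = ∫ s in a..b, g s := by
    unfold prim
    rw [← intervalIntegral.integral_add_adjacent_intervals
      (hint.intervalIntegrable (a := 0) (b := a)) h1]
    ring
  nlinarith [intervalIntegral.integral_nonneg (μ := volume) hab (fun u _ => hg u), h2]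

lemma prim_zero : prim g 0 = 0 := intervalIntegral.integral_same

lemma prim_nonneg (hint : Integrable g) (hg : ∀ s, 0 ≤ g s) {t : ℝ} (ht : 0 ≤ t) :
    0 ≤ prim g t := prim_zero (g := g) ▸ prim_mono hint hg ht

lemma prim_cont (hint : Integrable g) : Continuous (prim g) :=
  intervalIntegral.continuous_primitive (fun _ _ => hint.intervalIntegrable) 0

lemma prim_eq_Ioc {t : ℝ} (ht : 0 ≤ t) : prim g t = ∫ s in Ioc 0 t, g s :=
  intervalIntegral.integral_of_le ht

lemma prim_diff (hint : Integrable g) {a b : ℝ} (hab : a ≤ b) :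
    prim g b - prim g a = ∫ s in Ioc a b, g s := by
  rw [← intervalIntegral.integral_of_le hab]
  unfold prim
  rw [← intervalIntegral.integral_add_adjacent_intervals
    (hint.intervalIntegrable (a := 0) (b := a)) hint.intervalIntegrable]
  ring

lemma prim_bound (hint : Integrable g) (hg : ∀ s, 0 ≤ g s) (s : ℝ) :
    |prim g s| ≤ ∫ x, g x := by
  rcases le_total 0 s with hs | hs
  · rw [abs_of_nonneg (prim_nonneg hint hg hs), prim_eq_Ioc hs]
    exact setIntegral_le_integral hint (Eventually.of_forall hg)
  · have h0 : prim g s ≤ 0 := prim_zero (g := g) ▸ prim_mono hint hg hs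
    rw [abs_of_nonpos h0]
    have hd := prim_diff hint hs (b := 0)
    rw [prim_zero (g := g)] at hd
    have h2 : (0:ℝ) - prim g s ≤ ∫ x, g x := by
      rw [hd]; exact setIntegral_le_integral hint (Eventually.of_forall hg)
    linarith


lemma integrableOn_g_mul (hint : Integrable g) (hm : Measurable g) (hg : ∀ s, 0 ≤ g s)
    {f : ℝ → ℝ} {A : Set ℝ} (hf : AEStronglyMeasurable f (volume.restrict A)) (C : ℝ)
    (hfC : ∀ᵐ s ∂(volume.restrict A), |f s| ≤ C) (hA : MeasurableSet A) :
    IntegrableOn (fun s => g s * f s) A := by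
  apply Integrable.mono' ((hint.restrict (s := A)).const_mul C)
    (hm.aestronglyMeasurable.restrict.mul hf)
  filter_upwards [hfC] with s hs
  simp only [Pi.mul_apply, Real.norm_eq_abs, abs_mul, abs_of_nonneg (hg s)]
  rw [mul_comm C]
  exact mul_le_mul_of_nonneg_left hs (hg s)

lemma integrableOn_g_mul_pow (hint : Integrable g) (hm : Measurable g) (hg : ∀ s, 0 ≤ g s)
    (k : ℕ) {t : ℝ} (ht : 0 ≤ t) :
    IntegrableOn (fun s => g s * prim g s ^ k) (Ioc 0 t) := by
  apply integrableOn_g_mul hint hm hg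
    (((prim_cont hint).pow k).aestronglyMeasurable.restrict) ((∫ x, g x) ^ k)
    (Eventually.of_forall fun s => ?_) measurableSet_Ioc
  rw [Pi.pow_apply, abs_pow]
  exact pow_le_pow_left₀ (abs_nonneg _) (prim_bound hint hg s) k

lemma keyA (hm : Measurable g) (hint : Integrable g) (hg : ∀ s, 0 ≤ g s) (k : ℕ) :
    ∀ {t : ℝ}, 0 ≤ t →
      ∫ s in Ioc 0 t, g s * prim g s ^ k = prim g t ^ (k + 1) / (k + 1) := by
  induction k with
  | zero =>
    intro t ht
    simp [prim_eq_Ioc ht]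
  | succ k IH =>
    intro t ht
    set P := prim g t with hP
    set c : ℝ := (k : ℝ) + 1 with hc
    have hc0 : c ≠ 0 := by positivity
    -- the function under the double integral
    set H : ℝ × ℝ → ℝ := fun p => g p.1 * (g p.2 * prim g p.2 ^ k) with hH
    set R : Set (ℝ × ℝ) := {p : ℝ × ℝ | 0 < p.2 ∧ p.2 ≤ p.1} with hR
    have hRmeas : MeasurableSet R := by
      apply MeasurableSet.inter
      · exact measurableSet_lt measurable_const measurable_snd
      · exact measurableSet_le measurable_snd measurable_fst
    have hHmeas : Measurable (R.indicator H) := by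
      apply Measurable.indicator ?_ hRmeas
      exact (hm.comp measurable_fst).mul
        ((hm.comp measurable_snd).mul
          ((((prim_cont hint).measurable).comp measurable_snd).pow_const k))
    -- integrability of the indicator function on the product
    have hprod : Integrable (R.indicator H)
        ((volume.restrict (Ioc 0 t)).prod (volume.restrict (Ioc 0 t))) := by
      have hdom : Integrable (fun p : ℝ × ℝ => g p.1 * (g p.2 * (∫ x, g x) ^ k))
          ((volume.restrict (Ioc 0 t)).prod (volume.restrict (Ioc 0 t))) :=
        (hint.restrict (s := Ioc 0 t)).mul_prod
          ((hint.restrict (s := Ioc 0 t)).mul_const _)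
      apply Integrable.mono' hdom hHmeas.aestronglyMeasurable
      apply Eventually.of_forall
      intro p
      rw [Real.norm_eq_abs]
      by_cases hp : p ∈ R
      · rw [Set.indicator_of_mem hp]
        have h1 : |H p| = g p.1 * (g p.2 * |prim g p.2 ^ k|) := by
          rw [hH]; simp only
          rw [abs_mul, abs_mul, abs_of_nonneg (hg _), abs_of_nonneg (hg _)]
        rw [h1]
        apply mul_le_mul_of_nonneg_left _ (hg _)
        apply mul_le_mul_of_nonneg_left _ (hg _)
        rw [abs_pow]
        exact pow_le_pow_left₀ (abs_nonneg _) (prim_bound hint hg _) k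
      · rw [Set.indicator_of_notMem hp]
        simp only [abs_zero]
        exact mul_nonneg (hg _) (mul_nonneg (hg _) (pow_nonneg (integral_nonneg hg) k))
    -- Step 1: rewrite using IH
    have step1 : ∫ s in Ioc 0 t, g s * prim g s ^ (k + 1)
        = c * ∫ s in Ioc 0 t, ∫ u in Ioc 0 t, R.indicator H (s, u) := by
      rw [← integral_const_mul]
      apply setIntegral_congr_fun measurableSet_Ioc
      intro s hs
      have hs0 : (0:ℝ) ≤ s := le_of_lt hs.1
      have hinner : ∫ u in Ioc 0 t, R.indicator H (s, u)
          = g s * ∫ u in Ioc 0 s, g u * prim g u ^ k := by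
        have he : ∀ u : ℝ, R.indicator H (s, u)
            = (Ioc 0 s).indicator (fun u => g s * (g u * prim g u ^ k)) u := by
          intro u
          by_cases hu : u ∈ Ioc 0 s
          · rw [Set.indicator_of_mem hu]
            have : (s, u) ∈ R := ⟨hu.1, hu.2⟩
            rw [Set.indicator_of_mem this]
          · rw [Set.indicator_of_notMem hu]
            have : (s, u) ∉ R := by
              intro hmem
              exact hu ⟨hmem.1, hmem.2⟩
            rw [Set.indicator_of_notMem this]
        simp_rw [he]
        rw [setIntegral_indicator measurableSet_Ioc]
        have hset : Ioc 0 t ∩ Ioc 0 s = Ioc 0 s := by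
          apply Set.inter_eq_self_of_subset_right
          exact Ioc_subset_Ioc le_rfl hs.2
        rw [hset, integral_const_mul]
      dsimp only
      rw [hinner, IH hs0]
      field_simp
    have hswap : ∫ s in Ioc 0 t, ∫ u in Ioc 0 t, R.indicator H (s, u)
        = ∫ u in Ioc 0 t, ∫ s in Ioc 0 t, R.indicator H (s, u) :=
      integral_integral_swap hprod
    have step2 : ∫ u in Ioc 0 t, ∫ s in Ioc 0 t, R.indicator H (s, u)
        = ∫ u in Ioc 0 t, (g u * prim g u ^ k) * (P - prim g u) := by
      apply setIntegral_congr_fun measurableSet_Ioc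
      intro u hu
      dsimp only
      have he2 : ∀ s : ℝ, R.indicator H (s, u)
          = (Ici u).indicator (fun s => g s * (g u * prim g u ^ k)) s := by
        intro s
        by_cases hsu : u ≤ s
        · rw [Set.indicator_of_mem (show s ∈ Ici u from hsu),
            Set.indicator_of_mem (show (s, u) ∈ R from ⟨hu.1, hsu⟩)]
        · rw [Set.indicator_of_notMem (show s ∉ Ici u from hsu),
            Set.indicator_of_notMem
              (show (s, u) ∉ R from fun hmem => hsu hmem.2)]
      simp_rw [he2]
      rw [setIntegral_indicator measurableSet_Ici]
      have hset : Ioc 0 t ∩ Ici u = Icc u t := by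
        ext x
        simp only [mem_inter_iff, mem_Ioc, mem_Ici, mem_Icc]
        constructor
        · rintro ⟨⟨_, hx2⟩, hx3⟩; exact ⟨hx3, hx2⟩
        · rintro ⟨hx1, hx2⟩; exact ⟨⟨lt_of_lt_of_le hu.1 hx1, hx2⟩, hx1⟩
      rw [hset, integral_Icc_eq_integral_Ioc, integral_mul_const,
        ← prim_diff hint hu.2]
      ring
    have hInt1 := integrableOn_g_mul_pow hint hm hg k ht
    have hInt2 := integrableOn_g_mul_pow hint hm hg (k + 1) ht
    have expand : ∫ u in Ioc 0 t, (g u * prim g u ^ k) * (P - prim g u)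
        = P * (∫ u in Ioc 0 t, g u * prim g u ^ k)
          - ∫ u in Ioc 0 t, g u * prim g u ^ (k + 1) := by
      have hpt : ∀ u ∈ Ioc 0 t, (g u * prim g u ^ k) * (P - prim g u)
          = P * (g u * prim g u ^ k) - g u * prim g u ^ (k + 1) := by
        intro u _; ring
      rw [setIntegral_congr_fun measurableSet_Ioc hpt,
        integral_sub (hInt1.const_mul P) hInt2, integral_const_mul]
    have final : ∫ s in Ioc 0 t, g s * prim g s ^ (k + 1)
        = c * (P * (P ^ (k + 1) / c) - ∫ s in Ioc 0 t, g s * prim g s ^ (k + 1)) := by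
      conv_lhs => rw [step1, hswap, step2, expand, IH ht]
    set I := ∫ s in Ioc 0 t, g s * prim g s ^ (k + 1) with hI
    have h1 : c * (P * (P ^ (k + 1) / c)) = P ^ (k + 2) := by
      field_simp; ring
    have h2 : (c + 1) * I = P ^ (k + 2) := by
      rw [mul_sub, h1] at final
      linarith
    have hc1 : c + 1 ≠ 0 := by positivity
    have hgoal : I = P ^ (k + 2) / (c + 1) := by
      field_simp
      linarith [h2]
    rw [hgoal, hc]
    push_cast
    norm_num

end GronwallAux

set_option maxHeartbeats 2000000 in
open GronwallAux in
/-- Grönwall's lemma, integral form, with a monotonically increasing continuous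
source `ψ`, on the interval `[0, T)` with `T ∈ (0, ∞]` (encoded as `T : EReal`
with `0 < T`). -/
theorem gronwall_integral_monotone_source
    (T : EReal) (hT : 0 < T)
    (α ψ lam : ℝ → ℝ)
    (S : Set ℝ) (hS : S = {t : ℝ | 0 ≤ t ∧ (t : EReal) < T})
    (hα_meas : Measurable α)
    (hα_bdd : ∃ C : ℝ, ∀ᵐ t ∂(volume.restrict S), |α t| ≤ C)
    (hlam_int : IntegrableOn lam S)
    (hlam_nonneg : ∀ᵐ t ∂(volume.restrict S), 0 ≤ lam t)
    (hψ_mono : MonotoneOn ψ S)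
    (hψ_cont : ContinuousOn ψ S)
    (h : ∀ᵐ t ∂(volume.restrict S), α t ≤ ψ t + ∫ s in (0:ℝ)..t, lam s * α s) :
    ∀ᵐ t ∂(volume.restrict S),
      α t ≤ Real.exp (∫ τ in (0:ℝ)..t, lam τ) * ψ t := by
  classical
  have hSmeas : MeasurableSet S := by
    rw [hS]
    have heq : {t : ℝ | 0 ≤ t ∧ (t : EReal) < T}
        = Ici (0:ℝ) ∩ ((↑) : ℝ → EReal) ⁻¹' (Iio T) := rfl
    rw [heq]
    exact measurableSet_Ici.inter (measurable_coe_real_ereal measurableSet_Iio)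
  have hmemS : ∀ t ∈ S, 0 ≤ t ∧ (t : EReal) < T := by
    intro t ht; rwa [hS] at ht
  have hIccS : ∀ t ∈ S, Icc 0 t ⊆ S := by
    intro t ht s hs
    obtain ⟨ht0, htT⟩ := hmemS t ht
    rw [hS]
    exact ⟨hs.1, lt_of_le_of_lt (EReal.coe_le_coe_iff.mpr hs.2) htT⟩
  have hIocS : ∀ t ∈ S, Ioc 0 t ⊆ S := fun t ht =>
    Ioc_subset_Icc_self.trans (hIccS t ht)
  obtain ⟨C₀, hC₀⟩ := hα_bdd
  set C : ℝ := max C₀ 0 with hCdef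
  have hC0 : (0:ℝ) ≤ C := le_max_right _ _
  have hC : ∀ᵐ t ∂(volume.restrict S), |α t| ≤ C :=
    hC₀.mono fun t ht => ht.trans (le_max_left _ _)
  have hlam_aesm : AEStronglyMeasurable lam (volume.restrict S) :=
    hlam_int.aestronglyMeasurable
  obtain ⟨l, hl_meas, hl_ae⟩ :
      ∃ l : ℝ → ℝ, Measurable l ∧ lam =ᵐ[volume.restrict S] l :=
    ⟨hlam_aesm.mk lam, hlam_aesm.stronglyMeasurable_mk.measurable, hlam_aesm.ae_eq_mk⟩
  set A : Set ℝ := S ∩ {s : ℝ | 0 ≤ l s} with hAdef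
  have hA_meas : MeasurableSet A :=
    hSmeas.inter (measurableSet_le measurable_const hl_meas)
  set g : ℝ → ℝ := A.indicator l with hgdef
  have hg_meas : Measurable g := hl_meas.indicator hA_meas
  have hg_nonneg : ∀ s, 0 ≤ g s := by
    intro s
    by_cases hsA : s ∈ A
    · rw [hgdef, Set.indicator_of_mem hsA]; exact hsA.2
    · rw [hgdef, Set.indicator_of_notMem hsA]
  have hg_int : Integrable g := by
    have h1 : IntegrableOn l S := hlam_int.congr hl_ae
    have h2 : IntegrableOn l A := h1.mono_set (hAdef ▸ inter_subset_left)
    rw [hgdef]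
    exact h2.integrable_indicator hA_meas
  have hg_ae : g =ᵐ[volume.restrict S] lam := by
    filter_upwards [hl_ae, hlam_nonneg, ae_restrict_mem hSmeas] with s h1 h2 h3
    have hsA : s ∈ A := ⟨h3, show 0 ≤ l s by rw [← h1]; exact h2⟩
    rw [hgdef, Set.indicator_of_mem hsA, ← h1]
  have hIcongr : ∀ (u v : ℝ → ℝ), u =ᵐ[volume.restrict S] v → ∀ t ∈ S,
      ∫ s in (0:ℝ)..t, u s = ∫ s in (0:ℝ)..t, v s := by
    intro u v huv t htS
    have ht0 : (0:ℝ) ≤ t := (hmemS t htS).1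
    rw [intervalIntegral.integral_of_le ht0, intervalIntegral.integral_of_le ht0]
    exact integral_congr_ae (ae_restrict_of_ae_restrict_of_subset (hIocS t htS) huv)
  have h' : ∀ᵐ t ∂(volume.restrict S), α t ≤ ψ t + ∫ s in (0:ℝ)..t, g s * α s := by
    have hmul : (fun s => lam s * α s) =ᵐ[volume.restrict S] (fun s => g s * α s) := by
      filter_upwards [hg_ae] with s hs
      rw [hs]
    filter_upwards [h, ae_restrict_mem hSmeas] with t hht htS
    rw [hIcongr _ _ hmul t htS] at hht
    exact hht
  -- the iteration
  have main : ∀ n : ℕ, ∀ᵐ t ∂(volume.restrict S),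
      α t ≤ ψ t * (∑ i ∈ Finset.range n, prim g t ^ i / (Nat.factorial i : ℝ))
        + C * prim g t ^ n / (Nat.factorial n : ℝ) := by
    intro n
    induction n with
    | zero =>
      filter_upwards [hC] with t hCt
      simpa using (abs_le.mp hCt).2
    | succ n IH =>
      filter_upwards [h', ae_restrict_mem hSmeas] with t hα_t htS
      have ht0 : (0:ℝ) ≤ t := (hmemS t htS).1
      have hsubIoc : Ioc 0 t ⊆ S := hIocS t htS
      have IH' : ∀ᵐ s ∂(volume.restrict (Ioc 0 t)),
          α s ≤ ψ s * (∑ i ∈ Finset.range n, prim g s ^ i / (Nat.factorial i : ℝ))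
            + C * prim g s ^ n / (Nat.factorial n : ℝ) :=
        ae_restrict_of_ae_restrict_of_subset hsubIoc IH
      have hC' : ∀ᵐ s ∂(volume.restrict (Ioc 0 t)), |α s| ≤ C :=
        ae_restrict_of_ae_restrict_of_subset hsubIoc hC
      set B : ℝ := ∫ x, g x with hBdef
      have hγB : ∀ s, |prim g s| ≤ B := prim_bound hg_int hg_nonneg
      have hB0 : (0:ℝ) ≤ B := (abs_nonneg _).trans (hγB 0)
      have hψ_contIcc : ContinuousOn ψ (Icc 0 t) := hψ_cont.mono (hIccS t htS)
      obtain ⟨Cψ, hCψ⟩ := isCompact_Icc.exists_bound_of_continuousOn hψ_contIcc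
      have hCψ0 : (0:ℝ) ≤ Cψ := (norm_nonneg _).trans (hCψ 0 ⟨le_rfl, ht0⟩)
      have hψ_aesm : AEStronglyMeasurable ψ (volume.restrict (Ioc 0 t)) :=
        (hψ_contIcc.mono Ioc_subset_Icc_self).aestronglyMeasurable measurableSet_Ioc
      have hγ_cont : Continuous (prim g) := prim_cont hg_int
      have hsum_cont : Continuous
          (fun s => ∑ i ∈ Finset.range n, prim g s ^ i / (Nat.factorial i : ℝ)) :=
        continuous_finset_sum _ fun i _ => (hγ_cont.pow i).div_const _
      set SB : ℝ := ∑ i ∈ Finset.range n, B ^ i / (Nat.factorial i : ℝ) with hSBdef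
      have hSbound : ∀ s, |∑ i ∈ Finset.range n, prim g s ^ i / (Nat.factorial i : ℝ)| ≤ SB := by
        intro s
        calc |∑ i ∈ Finset.range n, prim g s ^ i / (Nat.factorial i : ℝ)|
            ≤ ∑ i ∈ Finset.range n, |prim g s ^ i / (Nat.factorial i : ℝ)| :=
              Finset.abs_sum_le_sum_abs _ _
          _ ≤ SB := by
              apply Finset.sum_le_sum
              intro i _
              rw [abs_div, abs_pow, Nat.abs_cast]
              exact (div_le_div_iff_of_pos_right (by positivity)).mpr
                (pow_le_pow_left₀ (abs_nonneg _) (hγB s) i)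
      set F : ℝ → ℝ := fun s =>
        ψ s * (∑ i ∈ Finset.range n, prim g s ^ i / (Nat.factorial i : ℝ))
          + C * prim g s ^ n / (Nat.factorial n : ℝ) with hFdef
      set F' : ℝ → ℝ := fun s =>
        ψ t * (∑ i ∈ Finset.range n, prim g s ^ i / (Nat.factorial i : ℝ))
          + C * prim g s ^ n / (Nat.factorial n : ℝ) with hF'def
      have htail : ∀ s, |C * prim g s ^ n / (Nat.factorial n : ℝ)|
          ≤ C * B ^ n / (Nat.factorial n : ℝ) := by
        intro s
        rw [abs_div, abs_mul, abs_of_nonneg hC0, Nat.abs_cast, abs_pow]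
        exact (div_le_div_iff_of_pos_right (by positivity)).mpr
          (mul_le_mul_of_nonneg_left (pow_le_pow_left₀ (abs_nonneg _) (hγB s) n) hC0)
      have hαint : IntegrableOn (fun s => g s * α s) (Ioc 0 t) :=
        integrableOn_g_mul hg_int hg_meas hg_nonneg
          hα_meas.aestronglyMeasurable.restrict C hC' measurableSet_Ioc
      have hFint : IntegrableOn (fun s => g s * F s) (Ioc 0 t) := by
        apply integrableOn_g_mul hg_int hg_meas hg_nonneg
          (hψ_aesm.mul hsum_cont.aestronglyMeasurable.restrict |>.add
            ((continuous_const.mul (hγ_cont.pow n)).div_const _).aestronglyMeasurable.restrict)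
          (Cψ * SB + C * B ^ n / (Nat.factorial n : ℝ)) ?_ measurableSet_Ioc
        filter_upwards [ae_restrict_mem measurableSet_Ioc] with s hs
        calc |ψ s * (∑ i ∈ Finset.range n, prim g s ^ i / (Nat.factorial i : ℝ))
              + C * prim g s ^ n / (Nat.factorial n : ℝ)|
            ≤ |ψ s| * |∑ i ∈ Finset.range n, prim g s ^ i / (Nat.factorial i : ℝ)|
              + |C * prim g s ^ n / (Nat.factorial n : ℝ)| := by
              rw [← abs_mul]; exact abs_add_le _ _
          _ ≤ Cψ * SB + C * B ^ n / (Nat.factorial n : ℝ) := by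
              apply add_le_add _ (htail s)
              apply mul_le_mul (hCψ s (Ioc_subset_Icc_self hs)) (hSbound s)
                (abs_nonneg _) hCψ0
      have hF'int : IntegrableOn (fun s => g s * F' s) (Ioc 0 t) := by
        apply integrableOn_g_mul hg_int hg_meas hg_nonneg
          (((continuous_const.mul hsum_cont)).add
            ((continuous_const.mul (hγ_cont.pow n)).div_const _)).aestronglyMeasurable.restrict
          (|ψ t| * SB + C * B ^ n / (Nat.factorial n : ℝ))
          ?_ measurableSet_Ioc
        filter_upwards [ae_restrict_mem measurableSet_Ioc] with s hs
        calc |ψ t * (∑ i ∈ Finset.range n, prim g s ^ i / (Nat.factorial i : ℝ))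
              + C * prim g s ^ n / (Nat.factorial n : ℝ)|
            ≤ |ψ t| * |∑ i ∈ Finset.range n, prim g s ^ i / (Nat.factorial i : ℝ)|
              + |C * prim g s ^ n / (Nat.factorial n : ℝ)| := by
              rw [← abs_mul]; exact abs_add_le _ _
          _ ≤ |ψ t| * SB + C * B ^ n / (Nat.factorial n : ℝ) :=
              add_le_add (mul_le_mul_of_nonneg_left (hSbound s) (abs_nonneg _)) (htail s)
      have step1 : ∫ s in (0:ℝ)..t, g s * α s ≤ ∫ s in Ioc 0 t, g s * F s := by
        rw [intervalIntegral.integral_of_le ht0]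
        apply integral_mono_ae hαint hFint
        filter_upwards [IH'] with s hs
        exact mul_le_mul_of_nonneg_left hs (hg_nonneg s)
      have step2 : ∫ s in Ioc 0 t, g s * F s ≤ ∫ s in Ioc 0 t, g s * F' s := by
        apply setIntegral_mono_on hFint hF'int measurableSet_Ioc
        intro s hs
        apply mul_le_mul_of_nonneg_left _ (hg_nonneg s)
        have hψle : ψ s ≤ ψ t := hψ_mono (hsubIoc hs) htS hs.2
        have hSum0 : 0 ≤ ∑ i ∈ Finset.range n, prim g s ^ i / (Nat.factorial i : ℝ) :=
          Finset.sum_nonneg fun i _ =>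
            div_nonneg (pow_nonneg (prim_nonneg hg_int hg_nonneg hs.1.le) i) (by positivity)
        rw [hFdef, hF'def]
        dsimp only
        have := mul_le_mul_of_nonneg_right hψle hSum0
        linarith
      have hpt : ∀ s, g s * F' s
          = (∑ i ∈ Finset.range n, (ψ t / (Nat.factorial i : ℝ)) * (g s * prim g s ^ i))
            + (C / (Nat.factorial n : ℝ)) * (g s * prim g s ^ n) := by
        intro s
        rw [hF'def]
        dsimp only
        rw [mul_add, Finset.mul_sum, Finset.mul_sum]
        congr 1
        · exact Finset.sum_congr rfl fun i _ => by ring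
        · ring
      have step3 : ∫ s in Ioc 0 t, g s * F' s
          = (∑ i ∈ Finset.range n,
              (ψ t / (Nat.factorial i : ℝ)) * (prim g t ^ (i+1) / ((i:ℝ)+1)))
            + (C / (Nat.factorial n : ℝ)) * (prim g t ^ (n+1) / ((n:ℝ)+1)) := by
        simp_rw [hpt]
        rw [integral_add
          (integrable_finset_sum _ fun i _ =>
            (integrableOn_g_mul_pow hg_int hg_meas hg_nonneg i ht0).const_mul _)
          ((integrableOn_g_mul_pow hg_int hg_meas hg_nonneg n ht0).const_mul _),
          integral_finset_sum _ (fun i _ =>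
            (integrableOn_g_mul_pow hg_int hg_meas hg_nonneg i ht0).const_mul _)]
        simp_rw [integral_const_mul]
        congr 1
        · exact Finset.sum_congr rfl fun i _ => by
            rw [keyA hg_meas hg_int hg_nonneg i ht0]
        · rw [keyA hg_meas hg_int hg_nonneg n ht0]
      -- algebra to reassemble
      have hfac : ∀ i : ℕ, ((Nat.factorial (i+1) : ℝ)) = ((i:ℝ)+1) * (Nat.factorial i : ℝ) := by
        intro i
        rw [Nat.factorial_succ]
        push_cast
        ring
      have halg : ∀ i : ℕ, (ψ t / (Nat.factorial i : ℝ)) * (prim g t ^ (i+1) / ((i:ℝ)+1))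
          = ψ t * (prim g t ^ (i+1) / (Nat.factorial (i+1) : ℝ)) := by
        intro i
        rw [hfac i, div_mul_div_comm, mul_div_assoc,
          mul_comm ((Nat.factorial i : ℝ)) ((i:ℝ)+1)]
      have halg2 : (C / (Nat.factorial n : ℝ)) * (prim g t ^ (n+1) / ((n:ℝ)+1))
          = C * prim g t ^ (n+1) / (Nat.factorial (n+1) : ℝ) := by
        rw [hfac n, div_mul_div_comm,
          mul_comm ((Nat.factorial n : ℝ)) ((n:ℝ)+1)]
      have hreassemble : ψ t + ((∑ i ∈ Finset.range n,
              (ψ t / (Nat.factorial i : ℝ)) * (prim g t ^ (i+1) / ((i:ℝ)+1)))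
            + (C / (Nat.factorial n : ℝ)) * (prim g t ^ (n+1) / ((n:ℝ)+1)))
          = ψ t * (∑ i ∈ Finset.range (n+1), prim g t ^ i / (Nat.factorial i : ℝ))
            + C * prim g t ^ (n+1) / (Nat.factorial (n+1) : ℝ) := by
        rw [Finset.sum_range_succ'
          (fun i => prim g t ^ i / (Nat.factorial i : ℝ)) n]
        rw [mul_add, Finset.mul_sum]
        rw [Finset.sum_congr rfl fun i _ => halg i, halg2]
        simp [Nat.factorial]
        ring
      calc α t ≤ ψ t + ∫ s in (0:ℝ)..t, g s * α s := hα_t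
        _ ≤ ψ t + ((∑ i ∈ Finset.range n,
              (ψ t / (Nat.factorial i : ℝ)) * (prim g t ^ (i+1) / ((i:ℝ)+1)))
            + (C / (Nat.factorial n : ℝ)) * (prim g t ^ (n+1) / ((n:ℝ)+1))) := by
            rw [← step3]
            linarith [step1, step2]
        _ = _ := hreassemble
  -- pass to the limit
  filter_upwards [ae_all_iff.mpr main, ae_restrict_mem hSmeas] with t hmn htS
  have hlamγ : ∫ τ in (0:ℝ)..t, lam τ = prim g t :=
    hIcongr lam g hg_ae.symm t htS
  set x : ℝ := prim g t with hxdef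
  have hsum : HasSum (fun i : ℕ => x ^ i / (Nat.factorial i : ℝ)) (Real.exp x) := by
    rw [Real.exp_eq_exp_ℝ]
    exact NormedSpace.expSeries_div_hasSum_exp x
  have h1 : Tendsto (fun n => ∑ i ∈ Finset.range n, x ^ i / (Nat.factorial i : ℝ))
      atTop (nhds (Real.exp x)) := hsum.tendsto_sum_nat
  have h2 : Tendsto (fun n : ℕ => C * x ^ n / (Nat.factorial n : ℝ)) atTop (nhds 0) := by
    have := (FloorSemiring.tendsto_pow_div_factorial_atTop (K := ℝ) x).const_mul C
    simpa [mul_div_assoc] using this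
  have h3 : Tendsto (fun n : ℕ =>
      ψ t * (∑ i ∈ Finset.range n, x ^ i / (Nat.factorial i : ℝ))
        + C * x ^ n / (Nat.factorial n : ℝ)) atTop (nhds (ψ t * Real.exp x + 0)) :=
    (h1.const_mul (ψ t)).add h2
  have h4 : α t ≤ ψ t * Real.exp x + 0 := ge_of_tendsto' h3 hmn
  rw [add_zero] at h4
  rw [hlamγ, mul_comm]
  exact h4
end
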